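/- arXiv:1307.2893 — 3 statements merged into one kernel-verified Lean document; each statement's English description precedes it below -/
import Mathlib

section
/- Suppose the process {x_n} converges almost surely and let x := lim_{n→∞} x_n. If P(x) = 0 almost surely, then the process {a_n} converges almost surely as well, and lim_{n→∞} a_n = x almost surely. -/
open MeasureTheory ProbabilityTheory Filter Set

noncomputable section

/-- The polynomial `P(z) = (1/2) ∑_{k=0}^m C(m,k) z^k (1-z)^{m-k} (p_k - k/m)`. -/
def polyP (m : ℕ) (p : ℕ → ℝ) (z : ℝ) : ℝ :=
  (1 / 2) * ∑ k ∈ Finset.range (m + 1),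
    (m.choose k : ℝ) * z ^ k * (1 - z) ^ (m - k) * (p k - (k : ℝ) / m)

/-- The zero set `Z_P = {z ∈ [0,1] : P(z) = 0}`. -/
def zeroSetP (m : ℕ) (p : ℕ → ℝ) : Set ℝ :=
  {z ∈ Set.Icc (0 : ℝ) 1 | polyP m p z = 0}

/-- The two-type preferential attachment process with `m` edges per new node and type
adoption parameters `p 0, …, p m`, defined on a probability space `(Ω, μ)` with filtration
`F`.  `A n` is the number of red nodes and `X n` the sum of the degrees of red nodes at time
`n`; the transition probabilities given `F n` are those of the model: a number `k` of red
neighbours is drawn from the `Binomial(m, x_n)` distribution, and then the new node is red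
with probability `p k` (adding `1` to the red nodes and `k + m` to the red degrees) and blue
with probability `1 - p k` (adding `k` to the red degrees). -/
structure PAProcess (Ω : Type) [MeasurableSpace Ω] where
  μ : Measure Ω
  isProb : IsProbabilityMeasure μ
  m : ℕ
  hm : 1 ≤ m
  p : ℕ → ℝ
  hp : ∀ k ≤ m, p k ∈ Set.Icc (0 : ℝ) 1
  A : ℕ → Ω → ℕ
  X : ℕ → Ω → ℕ
  F : Filtration ℕ ‹MeasurableSpace Ω›
  A0 : ℕ
  B0 : ℕ
  X0 : ℕ
  Y0 : ℕ
  hA0 : ∀ ω, A 0 ω = A0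
  hX0 : ∀ ω, X 0 ω = X0
  adaptedA : ∀ n, Measurable[F n] (A n)
  adaptedX : ∀ n, Measurable[F n] (X n)
  hXle : ∀ n ω, X n ω ≤ X0 + Y0 + 2 * m * n
  step_red : ∀ n, ∀ k ≤ m,
    μ[Set.indicator {ω | A (n + 1) ω = A n ω + 1 ∧ X (n + 1) ω = X n ω + k + m}
        (fun _ => (1 : ℝ)) | F n]
      =ᵐ[μ] fun ω => (m.choose k : ℝ) *
        ((X n ω : ℝ) / ((X0 : ℝ) + Y0 + 2 * m * n)) ^ k *
        (1 - (X n ω : ℝ) / ((X0 : ℝ) + Y0 + 2 * m * n)) ^ (m - k) * p k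
  step_blue : ∀ n, ∀ k ≤ m,
    μ[Set.indicator {ω | A (n + 1) ω = A n ω ∧ X (n + 1) ω = X n ω + k}
        (fun _ => (1 : ℝ)) | F n]
      =ᵐ[μ] fun ω => (m.choose k : ℝ) *
        ((X n ω : ℝ) / ((X0 : ℝ) + Y0 + 2 * m * n)) ^ k *
        (1 - (X n ω : ℝ) / ((X0 : ℝ) + Y0 + 2 * m * n)) ^ (m - k) * (1 - p k)

namespace PAProcess

variable {Ω : Type} [MeasurableSpace Ω] (P : PAProcess Ω)

/-- Total degree `S_n = S_0 + 2mn`. -/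
def S (n : ℕ) : ℕ := P.X0 + P.Y0 + 2 * P.m * n

/-- Normalized red degree `x_n = X_n / S_n`. -/
def x (n : ℕ) (ω : Ω) : ℝ := (P.X n ω : ℝ) / (P.S n : ℝ)

/-- Normalized red node count `a_n = A_n / (A_0 + B_0 + n)`. -/
def a (n : ℕ) (ω : Ω) : ℝ := (P.A n ω : ℝ) / ((P.A0 : ℝ) + P.B0 + n)

/-- The polynomial `P` of the process. -/
def poly : ℝ → ℝ := polyP P.m P.p

/-- The zero set `Z_P` of the process. -/
def Zp : Set ℝ := zeroSetP P.m P.p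

end PAProcess


namespace PAaux

open Topology
open scoped ENNReal


/-- `f(z) = ∑ C(m,k) z^k (1-z)^{m-k} p k`. -/
def fP (m : ℕ) (p : ℕ → ℝ) (z : ℝ) : ℝ :=
  ∑ k ∈ Finset.range (m + 1), (m.choose k : ℝ) * z ^ k * (1 - z) ^ (m - k) * p k

lemma binom_sum (m : ℕ) (z : ℝ) :
    ∑ k ∈ Finset.range (m + 1), (m.choose k : ℝ) * z ^ k * (1 - z) ^ (m - k) = 1 := by
  have h := add_pow z (1 - z) m
  simp only [add_sub_cancel, one_pow] at h
  calc ∑ k ∈ Finset.range (m + 1), (m.choose k : ℝ) * z ^ k * (1 - z) ^ (m - k)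
      = ∑ k ∈ Finset.range (m + 1), z ^ k * (1 - z) ^ (m - k) * (m.choose k : ℝ) :=
        Finset.sum_congr rfl fun k _ => by ring
    _ = 1 := h.symm

lemma sum_k_choose (m : ℕ) (hm : 1 ≤ m) (z : ℝ) :
    ∑ k ∈ Finset.range (m + 1), (m.choose k : ℝ) * z ^ k * (1 - z) ^ (m - k) * (k : ℝ)
      = m * z := by
  obtain ⟨m', rfl⟩ : ∃ m', m = m' + 1 := ⟨m - 1, (Nat.succ_pred_eq_of_pos hm).symm⟩
  rw [Finset.sum_range_succ']
  have h0 : ((m' + 1).choose 0 : ℝ) * z ^ 0 * (1 - z) ^ (m' + 1 - 0) * ((0 : ℕ) : ℝ) = 0 := by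
    simp
  rw [h0, add_zero]
  have hterm : ∀ i ∈ Finset.range (m' + 1),
      ((m' + 1).choose (i + 1) : ℝ) * z ^ (i + 1) * (1 - z) ^ (m' + 1 - (i + 1)) * ((i + 1 : ℕ) : ℝ)
        = ((m' + 1 : ℕ) : ℝ) * z * ((m'.choose i : ℝ) * z ^ i * (1 - z) ^ (m' - i)) := by
    intro i hi
    have h := Nat.add_one_mul_choose_eq m' i
    have h2 : ((m' + 1 : ℕ) : ℝ) * (m'.choose i : ℝ) = ((m' + 1).choose (i + 1) : ℝ) * ((i + 1 : ℕ) : ℝ) := by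
      exact_mod_cast congrArg (Nat.cast : ℕ → ℝ) h
    have h3 : m' + 1 - (i + 1) = m' - i := by omega
    rw [h3]
    push_cast at h2 ⊢
    linear_combination (-(z ^ (i + 1) * (1 - z) ^ (m' - i))) * h2
  rw [Finset.sum_congr rfl hterm, ← Finset.mul_sum, binom_sum m' z, mul_one]

lemma fP_eq_self (m : ℕ) (hm : 1 ≤ m) (p : ℕ → ℝ) (z : ℝ) (hz : polyP m p z = 0) :
    fP m p z = z := by
  have hm0 : (m : ℝ) ≠ 0 := by positivity
  have key : ∑ k ∈ Finset.range (m + 1),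
      (m.choose k : ℝ) * z ^ k * (1 - z) ^ (m - k) * (p k - (k : ℝ) / m)
      = fP m p z - (1 / m) * ∑ k ∈ Finset.range (m + 1),
          (m.choose k : ℝ) * z ^ k * (1 - z) ^ (m - k) * (k : ℝ) := by
    unfold fP
    rw [Finset.mul_sum, ← Finset.sum_sub_distrib]
    refine Finset.sum_congr rfl fun k _ => ?_
    field_simp
  have hz' := hz
  unfold polyP at hz'
  rw [key, sum_k_choose m hm z] at hz'
  have h4 : (1:ℝ)/m * ((m:ℝ)*z) = z := by field_simp
  rw [h4] at hz'
  linarith [hz']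

lemma fP_nonneg (m : ℕ) (p : ℕ → ℝ) (hp : ∀ k ≤ m, p k ∈ Set.Icc (0:ℝ) 1) {z : ℝ}
    (hz : z ∈ Set.Icc (0:ℝ) 1) : 0 ≤ fP m p z := by
  refine Finset.sum_nonneg fun k hk => ?_
  have hk' : k ≤ m := by simpa using Nat.lt_succ_iff.mp (Finset.mem_range.mp hk)
  have := (hp k hk').1
  have h1 : (0:ℝ) ≤ z := hz.1
  have h2 : (0:ℝ) ≤ 1 - z := by linarith [hz.2]
  positivity

lemma fP_le_one (m : ℕ) (p : ℕ → ℝ) (hp : ∀ k ≤ m, p k ∈ Set.Icc (0:ℝ) 1) {z : ℝ}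
    (hz : z ∈ Set.Icc (0:ℝ) 1) : fP m p z ≤ 1 := by
  have h := binom_sum m z
  calc fP m p z ≤ ∑ k ∈ Finset.range (m + 1), (m.choose k : ℝ) * z ^ k * (1 - z) ^ (m - k) := by
        refine Finset.sum_le_sum fun k hk => ?_
        have hk' : k ≤ m := by simpa using Nat.lt_succ_iff.mp (Finset.mem_range.mp hk)
        have h1 : (0:ℝ) ≤ z := hz.1
        have h2 : (0:ℝ) ≤ 1 - z := by linarith [hz.2]
        have hpre : (0:ℝ) ≤ (m.choose k : ℝ) * z ^ k * (1 - z) ^ (m - k) := by positivity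
        nlinarith [(hp k hk').2, hpre]
    _ = 1 := h

lemma continuous_fP (m : ℕ) (p : ℕ → ℝ) : Continuous (fP m p) := by
  unfold fP
  exact continuous_finset_sum _ fun k _ => by fun_prop

lemma sum_inv_sq_le (n : ℕ) :
    ∑ j ∈ Finset.range n, (1 / ((j : ℝ) + 1)) ^ 2 ≤ 2 := by
  have key : ∀ n : ℕ, ∑ j ∈ Finset.range n, (1 / ((j : ℝ) + 1)) ^ 2 ≤ 2 - 2 / ((n : ℝ) + 1) := by
    intro n
    induction n with
    | zero => simp
    | succ n ih =>
      rw [Finset.sum_range_succ]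
      have h1 : (0:ℝ) < (n : ℝ) + 1 := by positivity
      have h2 : (0:ℝ) < (n : ℝ) + 2 := by positivity
      have h3 : (1 / ((n : ℝ) + 1)) ^ 2 ≤ 2 / ((n : ℝ) + 1) - 2 / ((n : ℝ) + 2) := by
        rw [div_sub_div _ _ (ne_of_gt h1) (ne_of_gt h2), div_pow, one_pow,
          div_le_div_iff₀ (by positivity) (by positivity)]
        nlinarith
      push_cast
      rw [show ((n : ℝ) + 1) + 1 = (n : ℝ) + 2 by ring]
      linarith [ih, h3]
  calc ∑ j ∈ Finset.range n, (1 / ((j : ℝ) + 1)) ^ 2 ≤ 2 - 2 / ((n : ℝ) + 1) := key n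
    _ ≤ 2 := by
      have : (0:ℝ) ≤ 2 / ((n : ℝ) + 1) := by positivity
      linarith

/-- Kronecker's lemma (special case). -/
lemma kronecker {u : ℕ → ℝ} {c : ℝ}
    (h : Tendsto (fun n => ∑ j ∈ Finset.range n, u j / ((j : ℝ) + 1)) atTop (𝓝 c)) :
    Tendsto (fun n => (∑ j ∈ Finset.range n, u j) / (n : ℝ)) atTop (𝓝 0) := by
  set s : ℕ → ℝ := fun n => ∑ j ∈ Finset.range n, u j / ((j : ℝ) + 1) with hs
  have habel : ∀ n : ℕ, ∑ j ∈ Finset.range n, u j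
      = (n : ℝ) * s n - ∑ j ∈ Finset.range n, s j := by
    intro n
    have tele : ∑ j ∈ Finset.range n, (((j : ℝ) + 1) * s (j + 1) - (j : ℝ) * s j)
        = (n : ℝ) * s n - 0 * s 0 := by
      have := Finset.sum_range_sub (fun j => (j : ℝ) * s j) n
      simpa using this
    have hstep : ∀ j : ℕ, ((j : ℝ) + 1) * s (j + 1) - (j : ℝ) * s j = u j + s j := by
      intro j
      have hsj : s (j + 1) = s j + u j / ((j : ℝ) + 1) := by
        rw [hs]; simp [Finset.sum_range_succ]
      rw [hsj]
      have : ((j : ℝ) + 1) ≠ 0 := by positivity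
      field_simp
      ring
    have heq : ∑ j ∈ Finset.range n, (u j + s j)
        = ∑ j ∈ Finset.range n, (((j : ℝ) + 1) * s (j + 1) - (j : ℝ) * s j) :=
      Finset.sum_congr rfl fun j _ => (hstep j).symm
    rw [tele] at heq
    rw [Finset.sum_add_distrib] at heq
    simp only [zero_mul, sub_zero] at heq
    linarith [heq]
  have hces := h.cesaro
  have hlim : Tendsto (fun n => s n - (n : ℝ)⁻¹ * ∑ j ∈ Finset.range n, s j) atTop (𝓝 (c - c)) :=
    h.sub hces
  rw [sub_self] at hlim
  refine hlim.congr' ?_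
  filter_upwards [Ici_mem_atTop 1] with n hn
  have hn0 : (n : ℝ) ≠ 0 := by
    have : (1:ℕ) ≤ n := hn
    positivity
  rw [habel n]
  field_simp



variable {Ω : Type} [MeasurableSpace Ω] (P : PAProcess Ω)

def Ered (n k : ℕ) : Set Ω :=
  {ω | P.A (n + 1) ω = P.A n ω + 1 ∧ P.X (n + 1) ω = P.X n ω + k + P.m}

def Eblu (n k : ℕ) : Set Ω :=
  {ω | P.A (n + 1) ω = P.A n ω ∧ P.X (n + 1) ω = P.X n ω + k}

lemma measA (n : ℕ) : Measurable (P.A n) := (P.adaptedA n).mono (P.F.le n) le_rfl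
lemma measX (n : ℕ) : Measurable (P.X n) := (P.adaptedX n).mono (P.F.le n) le_rfl

lemma measEred (n k : ℕ) : MeasurableSet (Ered P n k) := by
  have h1 : MeasurableSet {ω | P.A (n + 1) ω = P.A n ω + 1} :=
    measurableSet_eq_fun (measA P (n + 1))
      ((measurable_from_top (f := fun a : ℕ => a + 1)).comp (measA P n))
  have h2 : MeasurableSet {ω | P.X (n + 1) ω = P.X n ω + k + P.m} :=
    measurableSet_eq_fun (measX P (n + 1))
      ((measurable_from_top (f := fun a : ℕ => a + k + P.m)).comp (measX P n))
  exact h1.inter h2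

lemma measEblu (n k : ℕ) : MeasurableSet (Eblu P n k) := by
  have h1 : MeasurableSet {ω | P.A (n + 1) ω = P.A n ω} :=
    measurableSet_eq_fun (measA P (n + 1)) (measA P n)
  have h2 : MeasurableSet {ω | P.X (n + 1) ω = P.X n ω + k} :=
    measurableSet_eq_fun (measX P (n + 1))
      ((measurable_from_top (f := fun a : ℕ => a + k)).comp (measX P n))
  exact h1.inter h2

lemma meas_x_F (n : ℕ) : Measurable[P.F n] (P.x n) := by
  unfold PAProcess.x
  exact (measurable_from_top.comp (P.adaptedX n)).div_const _

lemma meas_x (n : ℕ) : Measurable (P.x n) := (meas_x_F P n).mono (P.F.le n) le_rfl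

lemma S_cast (n : ℕ) : ((P.S n : ℕ) : ℝ) = (P.X0 : ℝ) + P.Y0 + 2 * P.m * n := by
  unfold PAProcess.S; push_cast; ring

lemma x_mem (n : ℕ) (ω : Ω) : P.x n ω ∈ Set.Icc (0 : ℝ) 1 := by
  unfold PAProcess.x
  rcases Nat.eq_zero_or_pos (P.S n) with h | h
  · simp [h]
  · have hpos : (0 : ℝ) < (P.S n : ℝ) := by exact_mod_cast h
    constructor
    · positivity
    · rw [div_le_one hpos]
      have := P.hXle n ω
      have hS : P.S n = P.X0 + P.Y0 + 2 * P.m * n := rfl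
      exact_mod_cast hS ▸ this

lemma integrable_bdd {f : Ω → ℝ} (hf : AEStronglyMeasurable f P.μ) {C : ℝ}
    (h : ∀ᵐ ω ∂P.μ, |f ω| ≤ C) : Integrable f P.μ := by
  haveI := P.isProb
  exact (integrable_const C).mono' hf
    (by filter_upwards [h] with ω hω; simpa [Real.norm_eq_abs] using hω)

lemma intIndicator {s : Set Ω} (hs : MeasurableSet s) :
    Integrable (s.indicator fun _ => (1 : ℝ)) P.μ := by
  haveI := P.isProb
  exact (integrable_const 1).indicator hs

/-- The function appearing on the right-hand side of the step hypotheses. -/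
def g (n k : ℕ) (c : ℝ) (ω : Ω) : ℝ :=
  (P.m.choose k : ℝ) * (P.x n ω) ^ k * (1 - P.x n ω) ^ (P.m - k) * c

lemma meas_g (n k : ℕ) (c : ℝ) : Measurable (g P n k c) := by
  unfold g
  have := meas_x P n
  fun_prop

lemma abs_g_le (n k : ℕ) {c : ℝ} (hc : c ∈ Set.Icc (0 : ℝ) 1) (ω : Ω) :
    |g P n k c ω| ≤ (P.m.choose k : ℝ) := by
  have hx := x_mem P n ω
  have h1 : (0 : ℝ) ≤ P.x n ω := hx.1
  have h2 : (0 : ℝ) ≤ 1 - P.x n ω := by linarith [hx.2]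
  have h3 : P.x n ω ^ k ≤ 1 := pow_le_one₀ h1 hx.2
  have h4 : (1 - P.x n ω) ^ (P.m - k) ≤ 1 := pow_le_one₀ h2 (by linarith [hx.1])
  have h5 : (0 : ℝ) ≤ g P n k c ω :=
    mul_nonneg (mul_nonneg (mul_nonneg (Nat.cast_nonneg _) (pow_nonneg h1 _))
      (pow_nonneg h2 _)) hc.1
  rw [abs_of_nonneg h5]
  unfold g
  have hC : (0:ℝ) ≤ (P.m.choose k : ℝ) := Nat.cast_nonneg _
  calc (P.m.choose k : ℝ) * P.x n ω ^ k * (1 - P.x n ω) ^ (P.m - k) * c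
      ≤ (P.m.choose k : ℝ) * 1 * 1 * 1 := by
        apply mul_le_mul
        · apply mul_le_mul
          · apply mul_le_mul le_rfl h3 (by positivity) hC
          · exact h4
          · positivity
          · positivity
        · exact hc.2
        · exact hc.1
        · positivity
    _ = (P.m.choose k : ℝ) := by ring

lemma int_g (n k : ℕ) {c : ℝ} (hc : c ∈ Set.Icc (0 : ℝ) 1) : Integrable (g P n k c) P.μ :=
  integrable_bdd P (meas_g P n k c).aestronglyMeasurable
    (Filter.Eventually.of_forall (abs_g_le P n k hc))

lemma step_red' (n k : ℕ) (hk : k ≤ P.m) :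
    P.μ[(Ered P n k).indicator fun _ => (1 : ℝ) | P.F n] =ᵐ[P.μ] g P n k (P.p k) := by
  have h := P.step_red n k hk
  have hx : ∀ ω : Ω, (P.X n ω : ℝ) / ((P.X0 : ℝ) + P.Y0 + 2 * P.m * n) = P.x n ω := by
    intro ω; rw [PAProcess.x, S_cast]
  filter_upwards [h] with ω hω
  rw [Ered]
  rw [hω, g, hx ω]

lemma step_blue' (n k : ℕ) (hk : k ≤ P.m) :
    P.μ[(Eblu P n k).indicator fun _ => (1 : ℝ) | P.F n] =ᵐ[P.μ] g P n k (1 - P.p k) := by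
  have h := P.step_blue n k hk
  have hx : ∀ ω : Ω, (P.X n ω : ℝ) / ((P.X0 : ℝ) + P.Y0 + 2 * P.m * n) = P.x n ω := by
    intro ω; rw [PAProcess.x, S_cast]
  filter_upwards [h] with ω hω
  rw [Eblu]
  rw [hω, g, hx ω]

lemma step_main (n : ℕ) :
    ∀ᵐ ω ∂P.μ,
      ((P.A (n + 1) ω : ℝ) - (P.A n ω : ℝ)
          = ∑ k ∈ Finset.range (P.m + 1), (Ered P n k).indicator (fun _ => (1 : ℝ)) ω)
        ∧ (P.A (n + 1) ω = P.A n ω ∨ P.A (n + 1) ω = P.A n ω + 1) := by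
  classical
  haveI := P.isProb
  set cr : Ω → ℕ := fun ω => ((Finset.range (P.m + 1)).filter fun k => ω ∈ Ered P n k).card
    with hcr_def
  set cb : Ω → ℕ := fun ω => ((Finset.range (P.m + 1)).filter fun k => ω ∈ Eblu P n k).card
    with hcb_def
  have hsumr : ∀ ω, ∑ k ∈ Finset.range (P.m + 1),
      (Ered P n k).indicator (fun _ => (1 : ℝ)) ω = (cr ω : ℝ) := by
    intro ω
    simp only [hcr_def, Set.indicator_apply]
    rw [Finset.sum_boole]
  have hsumb : ∀ ω, ∑ k ∈ Finset.range (P.m + 1),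
      (Eblu P n k).indicator (fun _ => (1 : ℝ)) ω = (cb ω : ℝ) := by
    intro ω
    simp only [hcb_def, Set.indicator_apply]
    rw [Finset.sum_boole]
  have hcr1 : ∀ ω, cr ω ≤ 1 := by
    intro ω
    refine Finset.card_le_one.mpr fun a ha b hb => ?_
    simp only [Finset.mem_filter, Ered, Set.mem_setOf_eq] at ha hb
    omega
  have hcb1 : ∀ ω, cb ω ≤ 1 := by
    intro ω
    refine Finset.card_le_one.mpr fun a ha b hb => ?_
    simp only [Finset.mem_filter, Eblu, Set.mem_setOf_eq] at ha hb
    omega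
  have hmut : ∀ ω, cr ω = 0 ∨ cb ω = 0 := by
    intro ω
    by_contra hcon
    push_neg at hcon
    obtain ⟨a, ha⟩ := Finset.card_pos.mp (Nat.pos_of_ne_zero hcon.1)
    obtain ⟨b, hb⟩ := Finset.card_pos.mp (Nat.pos_of_ne_zero hcon.2)
    simp only [Finset.mem_filter, Ered, Eblu, Set.mem_setOf_eq] at ha hb
    omega
  set h : Ω → ℝ := fun ω => ∑ k ∈ Finset.range (P.m + 1),
      ((Ered P n k).indicator (fun _ => (1 : ℝ)) ω + (Eblu P n k).indicator (fun _ => (1 : ℝ)) ω)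
    with hh
  have hcard : ∀ ω, h ω = (cr ω : ℝ) + (cb ω : ℝ) := by
    intro ω
    simp only [hh]
    rw [Finset.sum_add_distrib, hsumr, hsumb]
  have hle : ∀ ω, h ω ≤ 1 := by
    intro ω
    rw [hcard ω]
    have := hcr1 ω; have := hcb1 ω; have := hmut ω
    have hnat : cr ω + cb ω ≤ 1 := by omega
    exact_mod_cast hnat
  -- integral computations
  have hintr : ∀ k ∈ Finset.range (P.m + 1),
      Integrable ((Ered P n k).indicator fun _ => (1 : ℝ)) P.μ :=
    fun k _ => intIndicator P (measEred P n k)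
  have hintb : ∀ k ∈ Finset.range (P.m + 1),
      Integrable ((Eblu P n k).indicator fun _ => (1 : ℝ)) P.μ :=
    fun k _ => intIndicator P (measEblu P n k)
  have hpm : ∀ k ∈ Finset.range (P.m + 1), P.p k ∈ Set.Icc (0 : ℝ) 1 := by
    intro k hk
    exact P.hp k (Nat.lt_succ_iff.mp (Finset.mem_range.mp hk))
  have hpm' : ∀ k ∈ Finset.range (P.m + 1), (1 - P.p k) ∈ Set.Icc (0 : ℝ) 1 := by
    intro k hk
    have := hpm k hk
    constructor <;> [linarith [this.2]; linarith [this.1]]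
  have hir : ∀ k ∈ Finset.range (P.m + 1),
      ∫ ω, (Ered P n k).indicator (fun _ => (1 : ℝ)) ω ∂P.μ = ∫ ω, g P n k (P.p k) ω ∂P.μ := by
    intro k hk
    rw [← integral_condExp (P.F.le n) (f := (Ered P n k).indicator fun _ => (1:ℝ)) (μ := P.μ)]
    exact integral_congr_ae (step_red' P n k (Nat.lt_succ_iff.mp (Finset.mem_range.mp hk)))
  have hib : ∀ k ∈ Finset.range (P.m + 1),
      ∫ ω, (Eblu P n k).indicator (fun _ => (1 : ℝ)) ω ∂P.μ = ∫ ω, g P n k (1 - P.p k) ω ∂P.μ := by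
    intro k hk
    rw [← integral_condExp (P.F.le n) (f := (Eblu P n k).indicator fun _ => (1:ℝ)) (μ := P.μ)]
    exact integral_congr_ae (step_blue' P n k (Nat.lt_succ_iff.mp (Finset.mem_range.mp hk)))
  have hIH : ∫ ω, h ω ∂P.μ = 1 := by
    simp only [hh]
    rw [integral_finset_sum (μ := P.μ)
      (f := fun k ω => (Ered P n k).indicator (fun _ => (1:ℝ)) ω
        + (Eblu P n k).indicator (fun _ => (1:ℝ)) ω) _
      (fun k hk => (hintr k hk).add (hintb k hk))]
    have hterm : ∀ k ∈ Finset.range (P.m + 1),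
        ∫ ω, ((Ered P n k).indicator (fun _ => (1 : ℝ)) ω
            + (Eblu P n k).indicator (fun _ => (1 : ℝ)) ω) ∂P.μ
          = ∫ ω, (g P n k (P.p k) ω + g P n k (1 - P.p k) ω) ∂P.μ := by
      intro k hk
      rw [integral_add (hintr k hk) (hintb k hk),
        integral_add (int_g P n k (hpm k hk)) (int_g P n k (hpm' k hk)),
        hir k hk, hib k hk]
    rw [Finset.sum_congr rfl hterm,
      ← integral_finset_sum (μ := P.μ)
        (f := fun k ω => g P n k (P.p k) ω + g P n k (1 - P.p k) ω) _
        (fun k hk => (int_g P n k (hpm k hk)).add (int_g P n k (hpm' k hk)))]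
    have hone : ∀ ω, ∑ k ∈ Finset.range (P.m + 1),
        (g P n k (P.p k) ω + g P n k (1 - P.p k) ω) = 1 := by
      intro ω
      have : ∀ k ∈ Finset.range (P.m + 1),
          g P n k (P.p k) ω + g P n k (1 - P.p k) ω
            = (P.m.choose k : ℝ) * (P.x n ω) ^ k * (1 - P.x n ω) ^ (P.m - k) := by
        intro k _
        unfold g; ring
      rw [Finset.sum_congr rfl this, binom_sum]
    simp only [hone]
    simp
  -- h = 1 a.e.
  have hint_h : Integrable h P.μ := by
    simp only [hh]
    exact integrable_finset_sum _ fun k hk => ((hintr k hk).add (hintb k hk)).congr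
      (Filter.Eventually.of_forall fun ω => rfl)
  have hone_ae : ∀ᵐ ω ∂P.μ, h ω = 1 := by
    have h2 : ∫ ω, (1 - h ω) ∂P.μ = 0 := by
      rw [integral_sub (integrable_const 1) hint_h, hIH]
      simp
    have hnonneg : (0 : Ω → ℝ) ≤ fun ω => 1 - h ω := fun ω => by
      simpa using sub_nonneg.mpr (hle ω)
    have hfi : Integrable (fun ω => 1 - h ω) P.μ := (integrable_const 1).sub hint_h
    have h3 := (integral_eq_zero_iff_of_nonneg hnonneg hfi).mp h2
    filter_upwards [h3] with ω hω
    have h4 : 1 - h ω = 0 := hω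
    linarith
  filter_upwards [hone_ae] with ω hω
  have hcc : cr ω + cb ω = 1 := by
    have := hcard ω
    rw [hω] at this
    exact_mod_cast this.symm
  have hsum := hsumr ω
  rcases hmut ω with h0 | h0
  · -- no red event, so a blue event happened
    have hcb : cb ω = 1 := by omega
    obtain ⟨k, hk⟩ := Finset.card_eq_one.mp hcb
    have hkmem : k ∈ (Finset.range (P.m + 1)).filter fun k => ω ∈ Eblu P n k := by
      rw [hk]; exact Finset.mem_singleton_self k
    have hωb : ω ∈ Eblu P n k := (Finset.mem_filter.mp hkmem).2
    have hA : P.A (n + 1) ω = P.A n ω := hωb.1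
    refine ⟨?_, Or.inl hA⟩
    rw [hsum, hA, h0]
    simp
  · -- a red event happened
    have hcr : cr ω = 1 := by omega
    obtain ⟨k, hk⟩ := Finset.card_eq_one.mp hcr
    have hkmem : k ∈ (Finset.range (P.m + 1)).filter fun k => ω ∈ Ered P n k := by
      rw [hk]; exact Finset.mem_singleton_self k
    have hωr : ω ∈ Ered P n k := (Finset.mem_filter.mp hkmem).2
    have hA : P.A (n + 1) ω = P.A n ω + 1 := hωr.1
    refine ⟨?_, Or.inr hA⟩
    rw [hsum, hA, hcr]
    push_cast
    ring

/-- Martingale increment `D_n = (A_{n+1} - A_n) - f(x_n)`. -/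
def Dd (n : ℕ) (ω : Ω) : ℝ :=
  ((P.A (n + 1) ω : ℝ) - (P.A n ω : ℝ)) - fP P.m P.p (P.x n ω)

lemma meas_fx_F (n : ℕ) : Measurable[P.F n] fun ω => fP P.m P.p (P.x n ω) :=
  (continuous_fP P.m P.p).measurable.comp (meas_x_F P n)

lemma meas_Dd_F (n : ℕ) : Measurable[P.F (n + 1)] (Dd P n) := by
  apply Measurable.sub
  · apply Measurable.sub
    · exact measurable_from_top.comp (P.adaptedA (n + 1))
    · exact measurable_from_top.comp ((P.adaptedA n).mono (P.F.mono n.le_succ) le_rfl)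
  · exact (meas_fx_F P n).mono (P.F.mono n.le_succ) le_rfl

lemma meas_Dd (n : ℕ) : Measurable (Dd P n) :=
  (meas_Dd_F P n).mono (P.F.le (n + 1)) le_rfl

lemma fx_mem (n : ℕ) (ω : Ω) : fP P.m P.p (P.x n ω) ∈ Set.Icc (0 : ℝ) 1 :=
  ⟨fP_nonneg P.m P.p P.hp (x_mem P n ω), fP_le_one P.m P.p P.hp (x_mem P n ω)⟩

lemma abs_Dd_le (n : ℕ) : ∀ᵐ ω ∂P.μ, |Dd P n ω| ≤ 1 := by
  filter_upwards [step_main P n] with ω hω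
  have hfx := fx_mem P n ω
  rcases hω.2 with hA | hA <;>
    · rw [Dd, hA]
      push_cast
      rw [abs_le]
      constructor <;> [linarith [hfx.2]; linarith [hfx.1]]

lemma int_Dd (n : ℕ) : Integrable (Dd P n) P.μ :=
  integrable_bdd P (meas_Dd P n).aestronglyMeasurable (abs_Dd_le P n)

lemma int_diff (n : ℕ) : Integrable (fun ω => (P.A (n + 1) ω : ℝ) - (P.A n ω : ℝ)) P.μ := by
  refine integrable_bdd P (C := 1) ?_ ?_
  · exact ((measurable_from_top.comp (measA P (n + 1))).sub
      (measurable_from_top.comp (measA P n))).aestronglyMeasurable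
  · filter_upwards [step_main P n] with ω hω
    rcases hω.2 with hA | hA <;> (rw [hA]; push_cast; simp)

lemma int_fx (n : ℕ) : Integrable (fun ω => fP P.m P.p (P.x n ω)) P.μ := by
  refine integrable_bdd P (C := 1) ((meas_fx_F P n).mono (P.F.le n) le_rfl).aestronglyMeasurable ?_
  refine Filter.Eventually.of_forall fun ω => ?_
  have := fx_mem P n ω
  rw [abs_le]
  exact ⟨by linarith [this.1], this.2⟩

lemma condexp_diff (n : ℕ) :
    P.μ[fun ω => (P.A (n + 1) ω : ℝ) - (P.A n ω : ℝ) | P.F n]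
      =ᵐ[P.μ] fun ω => fP P.m P.p (P.x n ω) := by
  haveI := P.isProb
  have h1 : (fun ω => (P.A (n + 1) ω : ℝ) - (P.A n ω : ℝ))
      =ᵐ[P.μ] ∑ k ∈ Finset.range (P.m + 1), (Ered P n k).indicator fun _ => (1 : ℝ) := by
    filter_upwards [step_main P n] with ω hω
    rw [Finset.sum_apply]
    exact hω.1
  refine (condExp_congr_ae h1).trans ?_
  refine (condExp_finsetSum (fun k _ => intIndicator P (measEred P n k)) _).trans ?_
  have h2 : ∀ᵐ ω ∂P.μ, ∀ k, k ∈ Finset.range (P.m + 1) →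
      (P.μ[(Ered P n k).indicator fun _ => (1 : ℝ) | P.F n]) ω = g P n k (P.p k) ω := by
    rw [ae_all_iff]
    intro k
    by_cases hk : k ∈ Finset.range (P.m + 1)
    · filter_upwards [step_red' P n k (Nat.lt_succ_iff.mp (Finset.mem_range.mp hk))] with ω hω
      exact fun _ => hω
    · exact Filter.Eventually.of_forall fun ω h => absurd h hk
  filter_upwards [h2] with ω hω
  rw [Finset.sum_apply]
  rw [Finset.sum_congr rfl hω]
  rfl

lemma condexp_Dd (n : ℕ) : P.μ[Dd P n | P.F n] =ᵐ[P.μ] 0 := by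
  haveI := P.isProb
  have hD : Dd P n
      = (fun ω => (P.A (n + 1) ω : ℝ) - (P.A n ω : ℝ)) - fun ω => fP P.m P.p (P.x n ω) := rfl
  rw [hD]
  refine (condExp_sub (int_diff P n) (int_fx P n) _).trans ?_
  have h2 : P.μ[fun ω => fP P.m P.p (P.x n ω) | P.F n] =ᵐ[P.μ] fun ω => fP P.m P.p (P.x n ω) := by
    rw [condExp_of_stronglyMeasurable (P.F.le n) (meas_fx_F P n).stronglyMeasurable (int_fx P n)]
  filter_upwards [condexp_diff P n, h2] with ω h3 h4
  simp only [Pi.sub_apply, Pi.zero_apply, h3, h4]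
  ring

/-- `N_n = ∑_{j<n} D_j / (j+1)` is an L²-bounded martingale. -/
def Nn (n : ℕ) (ω : Ω) : ℝ := ∑ j ∈ Finset.range n, Dd P j ω / ((j : ℝ) + 1)

lemma meas_Nn_F (n : ℕ) : Measurable[P.F n] (Nn P n) := by
  unfold Nn
  refine Finset.measurable_sum _ fun j hj => ?_
  have hjn : j + 1 ≤ n := Finset.mem_range.mp hj
  exact ((meas_Dd_F P j).mono (P.F.mono hjn) le_rfl).div_const _

lemma meas_Nn (n : ℕ) : Measurable (Nn P n) := (meas_Nn_F P n).mono (P.F.le n) le_rfl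

lemma abs_Nn_le (n : ℕ) : ∀ᵐ ω ∂P.μ, |Nn P n ω| ≤ n := by
  have hall : ∀ᵐ ω ∂P.μ, ∀ j, |Dd P j ω| ≤ 1 := ae_all_iff.mpr fun j => abs_Dd_le P j
  filter_upwards [hall] with ω hω
  calc |Nn P n ω| ≤ ∑ j ∈ Finset.range n, |Dd P j ω / ((j : ℝ) + 1)| :=
        Finset.abs_sum_le_sum_abs _ _
    _ ≤ ∑ j ∈ Finset.range n, 1 := by
        refine Finset.sum_le_sum fun j _ => ?_
        rw [abs_div, abs_of_nonneg (show (0:ℝ) ≤ (j : ℝ) + 1 by positivity),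
          div_le_one (show (0:ℝ) < (j : ℝ) + 1 by positivity)]
        calc |Dd P j ω| ≤ 1 := hω j
          _ ≤ (j : ℝ) + 1 := by linarith [Nat.cast_nonneg (α := ℝ) j]
    _ = n := by simp

lemma int_Nn (n : ℕ) : Integrable (Nn P n) P.μ :=
  integrable_bdd P (meas_Nn P n).aestronglyMeasurable (abs_Nn_le P n)

lemma Nn_succ (n : ℕ) : Nn P (n + 1) = Nn P n + (((n : ℝ) + 1)⁻¹) • Dd P n := by
  funext ω
  simp only [Nn, Finset.sum_range_succ, Pi.add_apply, Pi.smul_apply, smul_eq_mul]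
  rw [div_eq_inv_mul]

lemma martN : Martingale (Nn P) P.F P.μ := by
  haveI := P.isProb
  refine martingale_nat (fun n => (meas_Nn_F P n).stronglyMeasurable) (int_Nn P) fun n => ?_
  rw [Nn_succ P n]
  have h1 := condExp_add (μ := P.μ) (m := P.F n) (int_Nn P n) ((int_Dd P n).smul (((n : ℝ) + 1)⁻¹))
  refine EventuallyEq.symm (h1.trans ?_)
  have h2 : P.μ[Nn P n | P.F n] = Nn P n :=
    condExp_of_stronglyMeasurable (P.F.le n) (meas_Nn_F P n).stronglyMeasurable (int_Nn P n)
  have h3 := condExp_smul (μ := P.μ) (m := P.F n) (((n : ℝ) + 1)⁻¹) (Dd P n)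
  filter_upwards [h3, condexp_Dd P n] with ω hω3 hω4
  rw [Pi.add_apply, h2, hω3, Pi.smul_apply]
  simp [hω4]

lemma int_mul_ND (n : ℕ) : ∫ ω, Nn P n ω * Dd P n ω ∂P.μ = 0 := by
  haveI := P.isProb
  have hint : Integrable (Nn P n * Dd P n) P.μ := by
    refine integrable_bdd P ((meas_Nn P n).mul (meas_Dd P n)).aestronglyMeasurable
      (C := (n : ℝ)) ?_
    filter_upwards [abs_Nn_le P n, abs_Dd_le P n] with ω h1 h2
    rw [Pi.mul_apply, abs_mul]
    calc |Nn P n ω| * |Dd P n ω| ≤ (n : ℝ) * 1 :=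
          mul_le_mul h1 h2 (abs_nonneg _) (Nat.cast_nonneg _)
      _ = n := by ring
  have h1 : ∫ ω, (Nn P n * Dd P n) ω ∂P.μ = ∫ ω, (P.μ[Nn P n * Dd P n | P.F n]) ω ∂P.μ :=
    (integral_condExp (P.F.le n)).symm
  have h2 : P.μ[Nn P n * Dd P n | P.F n] =ᵐ[P.μ] Nn P n * P.μ[Dd P n | P.F n] :=
    condExp_mul_of_stronglyMeasurable_left (meas_Nn_F P n).stronglyMeasurable hint (int_Dd P n)
  have h3 : P.μ[Nn P n * Dd P n | P.F n] =ᵐ[P.μ] 0 := by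
    filter_upwards [h2, condexp_Dd P n] with ω hω2 hω4
    rw [hω2, Pi.mul_apply, hω4]
    simp
  calc ∫ ω, Nn P n ω * Dd P n ω ∂P.μ = ∫ ω, (P.μ[Nn P n * Dd P n | P.F n]) ω ∂P.μ := h1
    _ = ∫ ω, (0 : Ω → ℝ) ω ∂P.μ := integral_congr_ae h3
    _ = 0 := by simp

lemma int_sq_Nn_int (n : ℕ) : Integrable (fun ω => (Nn P n ω) ^ 2) P.μ := by
  refine integrable_bdd P ((meas_Nn P n).pow_const 2).aestronglyMeasurable
    (C := (n : ℝ) ^ 2) ?_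
  filter_upwards [abs_Nn_le P n] with ω h1
  rw [abs_pow]
  exact pow_le_pow_left₀ (abs_nonneg _) h1 2

lemma int_sq_Dd_int (n : ℕ) : Integrable (fun ω => (Dd P n ω) ^ 2) P.μ := by
  refine integrable_bdd P ((meas_Dd P n).pow_const 2).aestronglyMeasurable (C := 1) ?_
  filter_upwards [abs_Dd_le P n] with ω h1
  rw [abs_pow]
  calc |Dd P n ω| ^ 2 ≤ 1 ^ 2 := pow_le_pow_left₀ (abs_nonneg _) h1 2
    _ = 1 := one_pow 2

lemma int_sq_Dd_le (n : ℕ) : ∫ ω, (Dd P n ω) ^ 2 ∂P.μ ≤ 1 := by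
  haveI := P.isProb
  calc ∫ ω, (Dd P n ω) ^ 2 ∂P.μ ≤ ∫ _ω, (1 : ℝ) ∂P.μ := by
        refine integral_mono_ae (int_sq_Dd_int P n) (integrable_const 1) ?_
        filter_upwards [abs_Dd_le P n] with ω h1
        calc (Dd P n ω) ^ 2 = |Dd P n ω| ^ 2 := (sq_abs _).symm
          _ ≤ 1 ^ 2 := pow_le_pow_left₀ (abs_nonneg _) h1 2
          _ = 1 := one_pow 2
    _ = 1 := by simp

lemma int_sq_Nn_le (n : ℕ) :
    ∫ ω, (Nn P n ω) ^ 2 ∂P.μ ≤ ∑ j ∈ Finset.range n, (1 / ((j : ℝ) + 1)) ^ 2 := by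
  haveI := P.isProb
  induction n with
  | zero => simp [Nn]
  | succ n ih =>
    have hpt : ∀ ω, (Nn P (n + 1) ω) ^ 2
        = (Nn P n ω) ^ 2 + (2 * ((n : ℝ) + 1)⁻¹) * (Nn P n ω * Dd P n ω)
          + (((n : ℝ) + 1)⁻¹) ^ 2 * (Dd P n ω) ^ 2 := by
      intro ω
      have h1 : Nn P (n + 1) ω = Nn P n ω + ((n : ℝ) + 1)⁻¹ * Dd P n ω := by
        rw [Nn_succ P n]; simp
      rw [h1]; ring
    have hint1 : Integrable (fun ω => (2 * ((n : ℝ) + 1)⁻¹) * (Nn P n ω * Dd P n ω)) P.μ := by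
      have : Integrable (fun ω => Nn P n ω * Dd P n ω) P.μ := by
        refine integrable_bdd P ((meas_Nn P n).mul (meas_Dd P n)).aestronglyMeasurable
          (C := (n : ℝ)) ?_
        filter_upwards [abs_Nn_le P n, abs_Dd_le P n] with ω h1 h2
        rw [abs_mul]
        calc |Nn P n ω| * |Dd P n ω| ≤ (n : ℝ) * 1 :=
              mul_le_mul h1 h2 (abs_nonneg _) (Nat.cast_nonneg _)
          _ = n := by ring
      exact this.const_mul _
    have hint2 : Integrable (fun ω => (((n : ℝ) + 1)⁻¹) ^ 2 * (Dd P n ω) ^ 2) P.μ :=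
      (int_sq_Dd_int P n).const_mul _
    have hIeq : ∫ ω, (Nn P (n + 1) ω) ^ 2 ∂P.μ
        = ∫ ω, (Nn P n ω) ^ 2 ∂P.μ
          + ((2 * ((n : ℝ) + 1)⁻¹) * ∫ ω, Nn P n ω * Dd P n ω ∂P.μ
            + (((n : ℝ) + 1)⁻¹) ^ 2 * ∫ ω, (Dd P n ω) ^ 2 ∂P.μ) := by
      have e1 : ∫ ω, (Nn P (n + 1) ω) ^ 2 ∂P.μ
          = ∫ ω, ((Nn P n ω) ^ 2 + ((2 * ((n : ℝ) + 1)⁻¹) * (Nn P n ω * Dd P n ω)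
              + (((n : ℝ) + 1)⁻¹) ^ 2 * (Dd P n ω) ^ 2)) ∂P.μ :=
        integral_congr_ae (Filter.Eventually.of_forall fun ω => (hpt ω).trans (by ring))
      have hint12 : Integrable (fun ω => (2 * ((n : ℝ) + 1)⁻¹) * (Nn P n ω * Dd P n ω)
          + (((n : ℝ) + 1)⁻¹) ^ 2 * (Dd P n ω) ^ 2) P.μ := hint1.add hint2
      rw [e1, integral_add (int_sq_Nn_int P n) hint12,
        integral_add hint1 hint2, integral_const_mul, integral_const_mul]
    rw [hIeq, int_mul_ND P n, Finset.sum_range_succ]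
    have hsq : (((n : ℝ) + 1)⁻¹) ^ 2 * ∫ ω, (Dd P n ω) ^ 2 ∂P.μ ≤ (1 / ((n : ℝ) + 1)) ^ 2 := by
      rw [one_div]
      calc (((n : ℝ) + 1)⁻¹) ^ 2 * ∫ ω, (Dd P n ω) ^ 2 ∂P.μ
          ≤ (((n : ℝ) + 1)⁻¹) ^ 2 * 1 := by
            refine mul_le_mul_of_nonneg_left (int_sq_Dd_le P n) (by positivity)
        _ = (((n : ℝ) + 1)⁻¹) ^ 2 := by ring
    linarith [ih, hsq]

lemma elp_Nn (n : ℕ) : eLpNorm (Nn P n) 1 P.μ ≤ (2 : ℝ≥0∞) := by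
  haveI := P.isProb
  have hint := int_Nn P n
  have hsq : ∫ ω, (Nn P n ω) ^ 2 ∂P.μ ≤ 2 :=
    le_trans (int_sq_Nn_le P n) (sum_inv_sq_le n)
  have habs : ∫ ω, |Nn P n ω| ∂P.μ ≤ 2 := by
    have h1 : ∀ ω, |Nn P n ω| ≤ ((Nn P n ω) ^ 2 + 1) / 2 := by
      intro ω
      nlinarith [sq_nonneg (|Nn P n ω| - 1), sq_abs (Nn P n ω), abs_nonneg (Nn P n ω)]
    calc ∫ ω, |Nn P n ω| ∂P.μ ≤ ∫ ω, ((Nn P n ω) ^ 2 + 1) / 2 ∂P.μ :=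
          integral_mono hint.abs (((int_sq_Nn_int P n).add (integrable_const 1)).div_const 2) h1
      _ = ((∫ ω, (Nn P n ω) ^ 2 ∂P.μ) + 1) / 2 := by
          rw [integral_div, integral_add (int_sq_Nn_int P n) (integrable_const 1)]
          simp
      _ ≤ 2 := by linarith [hsq]
  rw [eLpNorm_one_eq_lintegral_enorm, ← ofReal_integral_norm_eq_lintegral_enorm hint]
  calc ENNReal.ofReal (∫ ω, ‖Nn P n ω‖ ∂P.μ)
      ≤ ENNReal.ofReal 2 := ENNReal.ofReal_le_ofReal
        (by simpa [Real.norm_eq_abs] using habs)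
    _ = 2 := by norm_num

lemma Nconv : ∀ᵐ ω ∂P.μ, ∃ c, Tendsto (fun n => Nn P n ω) atTop (𝓝 c) := by
  haveI := P.isProb
  exact (martN P).submartingale.exists_ae_tendsto_of_bdd (elp_Nn P)

end PAaux


/-- **From degrees to vertices.** Suppose the process `{x_n}` converges almost surely with
limit `x = lim x_n`.  If `P(x) = 0` almost surely, then the process `{a_n}` converges almost
surely as well, and `lim a_n = x` almost surely. -/
theorem tendsto_a_of_tendsto_x
    {Ω : Type} [MeasurableSpace Ω] (P : PAProcess Ω)
    (L : Ω → ℝ)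
    (hx : ∀ᵐ ω ∂P.μ, Tendsto (fun n => P.x n ω) atTop (nhds (L ω)))
    (hP : ∀ᵐ ω ∂P.μ, P.poly (L ω) = 0) :
    ∀ᵐ ω ∂P.μ, Tendsto (fun n => P.a n ω) atTop (nhds (L ω)) := by
  haveI := P.isProb
  filter_upwards [hx, hP, PAaux.Nconv P] with ω hωx hωP hωN
  obtain ⟨c, hc⟩ := hωN
  have hkron : Tendsto (fun n => (∑ j ∈ Finset.range n, PAaux.Dd P j ω) / (n : ℝ))
      atTop (nhds 0) := PAaux.kronecker hc
  have hfL : PAaux.fP P.m P.p (L ω) = L ω := PAaux.fP_eq_self P.m P.hm P.p (L ω) hωP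
  have hcont : Tendsto (fun n => PAaux.fP P.m P.p (P.x n ω)) atTop
      (nhds (PAaux.fP P.m P.p (L ω))) :=
    ((PAaux.continuous_fP P.m P.p).continuousAt).tendsto.comp hωx
  have hces := hcont.cesaro
  rw [hfL] at hces
  have hdecomp : ∀ n : ℕ, (P.A n ω : ℝ)
      = (P.A0 : ℝ) + (∑ j ∈ Finset.range n, PAaux.Dd P j ω)
        + ∑ j ∈ Finset.range n, PAaux.fP P.m P.p (P.x j ω) := by
    intro n
    have htele : ∑ j ∈ Finset.range n, ((P.A (j + 1) ω : ℝ) - (P.A j ω : ℝ))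
        = (P.A n ω : ℝ) - (P.A 0 ω : ℝ) := Finset.sum_range_sub (fun j => (P.A j ω : ℝ)) n
    have hsplit : ∑ j ∈ Finset.range n, ((P.A (j + 1) ω : ℝ) - (P.A j ω : ℝ))
        = (∑ j ∈ Finset.range n, PAaux.Dd P j ω)
          + ∑ j ∈ Finset.range n, PAaux.fP P.m P.p (P.x j ω) := by
      rw [← Finset.sum_add_distrib]
      exact Finset.sum_congr rfl fun j _ => by rw [PAaux.Dd]; ring
    rw [P.hA0 ω] at htele
    linarith [htele, hsplit]
  have hAn : Tendsto (fun n : ℕ => (P.A n ω : ℝ) / (n : ℝ)) atTop (nhds (L ω)) := by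
    have h1 : Tendsto (fun n : ℕ => (P.A0 : ℝ) / n) atTop (nhds 0) :=
      tendsto_const_div_atTop_nhds_zero_nat _
    have hsum : Tendsto (fun n : ℕ => (P.A0 : ℝ) / n
        + ((∑ j ∈ Finset.range n, PAaux.Dd P j ω) / n
          + (n : ℝ)⁻¹ * ∑ j ∈ Finset.range n, PAaux.fP P.m P.p (P.x j ω)))
        atTop (nhds (0 + (0 + L ω))) := h1.add (hkron.add hces)
    simp only [zero_add] at hsum
    refine hsum.congr' ?_
    filter_upwards [Ici_mem_atTop 1] with n hn
    have hn0 : (n : ℝ) ≠ 0 := by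
      have : (1 : ℕ) ≤ n := hn
      positivity
    rw [hdecomp n]
    field_simp
    ring
  have hfrac : Tendsto (fun n : ℕ => (n : ℝ) / ((P.A0 : ℝ) + P.B0 + n)) atTop (nhds 1) := by
    have h2 := tendsto_natCast_div_add_atTop (𝕜 := ℝ) ((P.A0 : ℝ) + P.B0)
    exact h2.congr fun n => by rw [add_comm ((n : ℝ)) ((P.A0 : ℝ) + P.B0)]
  have hmul := hAn.mul hfrac
  rw [mul_one] at hmul
  refine hmul.congr' ?_
  filter_upwards [Ici_mem_atTop 1] with n hn
  have hn0 : (n : ℝ) ≠ 0 := by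
    have : (1 : ℕ) ≤ n := hn
    positivity
  have hd0 : (P.A0 : ℝ) + P.B0 + n ≠ 0 := by
    have h1 : (0 : ℝ) ≤ (P.A0 : ℝ) := Nat.cast_nonneg _
    have h2 : (0 : ℝ) ≤ (P.B0 : ℝ) := Nat.cast_nonneg _
    have h3 : (0 : ℝ) < (n : ℝ) := by
      have : (1 : ℕ) ≤ n := hn
      exact_mod_cast Nat.pos_of_ne_zero (by omega)
    positivity
  rw [PAProcess.a]
  field_simp
end
end

section
/- The process {x_n} is a stochastic approximation process with driving function F = P: one has E(x_{n+1} − x_n | F_n) = (2m/S_{n+1}) P(x_n), and writing x_{n+1} − x_n = (1/n)(P(x_n) + ξ_{n+1} + R_n) with ξ_{n+1} = n(x_{n+1} − x_n − E(x_{n+1} − x_n | F_n)) and R_n = −((S_0 + 2m)/(S_0 + 2m(n+1))) P(x_n), the noise terms satisfy E(ξ_{n+1} | F_n) = 0 and |ξ_n| ≤ 2 for all n ≥ 1, and the F_n-measurable remainder terms satisfy Σ_{n≥1} n^{-1}|R_n| < ∞ almost surely. -/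
open MeasureTheory ProbabilityTheory Filter Set

noncomputable section

namespace PAProcess

variable {Ω : Type} [MeasurableSpace Ω] (P : PAProcess Ω)

/-- The noise term `ξ_{n+1} = n (x_{n+1} − x_n − E(x_{n+1} − x_n | F_n))`
(so `P.xi n` is `ξ_{n+1}`). -/
def xi (n : ℕ) : Ω → ℝ :=
  fun ω => (n : ℝ) * (P.x (n + 1) ω - P.x n ω -
    (P.μ[fun ω' => P.x (n + 1) ω' - P.x n ω' | P.F n]) ω)

/-- The remainder term `R_n = −((S_0 + 2m)/(S_0 + 2m(n+1))) P(x_n)`. -/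
def Rrem (n : ℕ) : Ω → ℝ :=
  fun ω => -(((P.S 0 : ℝ) + 2 * P.m) / ((P.S 0 : ℝ) + 2 * P.m * (n + 1))) * P.poly (P.x n ω)

end PAProcess


section AuxAlgebra

lemma bern_sum (m : ℕ) (z : ℝ) :
    ∑ k ∈ Finset.range (m + 1), (m.choose k : ℝ) * z ^ k * (1 - z) ^ (m - k) = 1 := by
  calc ∑ k ∈ Finset.range (m + 1), (m.choose k : ℝ) * z ^ k * (1 - z) ^ (m - k)
      = ∑ k ∈ Finset.range (m + 1), z ^ k * (1 - z) ^ (m - k) * (m.choose k : ℝ) := by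
        apply Finset.sum_congr rfl; intro k _; ring
    _ = (z + (1 - z)) ^ m := (add_pow z (1 - z) m).symm
    _ = 1 := by norm_num

lemma bern_mean (m : ℕ) (z : ℝ) (hm : 1 ≤ m) :
    ∑ k ∈ Finset.range (m + 1), (m.choose k : ℝ) * z ^ k * (1 - z) ^ (m - k) * k
      = m * z := by
  obtain ⟨n, rfl⟩ : ∃ n, m = n + 1 := ⟨m - 1, by omega⟩
  rw [Finset.sum_range_succ']
  simp only [Nat.cast_zero, mul_zero, add_zero]
  have : ∀ j ∈ Finset.range (n+1),
      ((n+1).choose (j+1) : ℝ) * z ^ (j+1) * (1 - z) ^ (n + 1 - (j+1)) * ((j+1 : ℕ) : ℝ)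
        = ((n:ℝ)+1) * z * ((n.choose j : ℝ) * z ^ j * (1 - z) ^ (n - j)) := by
    intro j _
    have hk : ((n+1).choose (j+1) : ℝ) * ((j:ℝ)+1) = ((n:ℝ)+1) * (n.choose j) := by
      have h2 : ((n.succ * n.choose j : ℕ) : ℝ) = (((n+1).choose (j+1) * (j+1) : ℕ) : ℝ) := by
        rw [Nat.add_one_mul_choose_eq n j]
      push_cast at h2
      linarith
    have hsub : n + 1 - (j + 1) = n - j := by omega
    rw [hsub]
    push_cast
    linear_combination (z ^ (j+1) * (1 - z) ^ (n - j)) * hk +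
      ((1 - z) ^ (n - j) * ((n:ℝ)+1) * (n.choose j)) * (pow_succ z j)
  rw [Finset.sum_congr rfl this, ← Finset.mul_sum, bern_sum n z]
  push_cast; ring

lemma abs_polyP_le (m : ℕ) (hm : 1 ≤ m) (p : ℕ → ℝ) (hp : ∀ k ≤ m, p k ∈ Set.Icc (0:ℝ) 1)
    {z : ℝ} (hz : z ∈ Set.Icc (0:ℝ) 1) : |polyP m p z| ≤ 1/2 := by
  unfold polyP
  rw [abs_mul]
  have h1 : |∑ k ∈ Finset.range (m+1),
      (m.choose k : ℝ) * z ^ k * (1-z) ^ (m-k) * (p k - (k:ℝ)/m)| ≤ 1 := by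
    calc |∑ k ∈ Finset.range (m+1),
        (m.choose k : ℝ) * z ^ k * (1-z) ^ (m-k) * (p k - (k:ℝ)/m)|
        ≤ ∑ k ∈ Finset.range (m+1),
          |(m.choose k : ℝ) * z ^ k * (1-z) ^ (m-k) * (p k - (k:ℝ)/m)| :=
        Finset.abs_sum_le_sum_abs _ _
      _ ≤ ∑ k ∈ Finset.range (m+1), (m.choose k : ℝ) * z ^ k * (1-z) ^ (m-k) := by
        apply Finset.sum_le_sum
        intro k hk
        have hk' : k ≤ m := by have := Finset.mem_range.mp hk; omega
        have hb : (0:ℝ) ≤ (m.choose k : ℝ) * z ^ k * (1-z) ^ (m-k) := by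
          apply mul_nonneg (mul_nonneg (by positivity) (pow_nonneg hz.1 _))
          exact pow_nonneg (by linarith [hz.2]) _
        have hkm : (k:ℝ)/m ∈ Set.Icc (0:ℝ) 1 := by
          constructor
          · positivity
          · rw [div_le_one (by exact_mod_cast Nat.pos_of_ne_zero (by omega))]
            exact_mod_cast hk'
        have hpk := hp k hk'
        have habs : |p k - (k:ℝ)/m| ≤ 1 := by
          rw [abs_le]; constructor <;> [linarith [hpk.1, hkm.2]; linarith [hpk.2, hkm.1]]
        calc |(m.choose k : ℝ) * z ^ k * (1-z) ^ (m-k) * (p k - (k:ℝ)/m)|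
            = ((m.choose k : ℝ) * z ^ k * (1-z) ^ (m-k)) * |p k - (k:ℝ)/m| := by
              rw [abs_mul, abs_of_nonneg hb]
          _ ≤ ((m.choose k : ℝ) * z ^ k * (1-z) ^ (m-k)) * 1 :=
              mul_le_mul_of_nonneg_left habs hb
          _ = (m.choose k : ℝ) * z ^ k * (1-z) ^ (m-k) := mul_one _
      _ = 1 := bern_sum m z
  calc |(1:ℝ)/2| * |∑ k ∈ Finset.range (m+1),
        (m.choose k : ℝ) * z ^ k * (1-z) ^ (m-k) * (p k - (k:ℝ)/m)|
      ≤ |(1:ℝ)/2| * 1 := mul_le_mul_of_nonneg_left h1 (abs_nonneg _)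
    _ = 1/2 := by norm_num

lemma alg_sum (m : ℕ) (hm : 1 ≤ m) (p : ℕ → ℝ) (z : ℝ) :
    ∑ k ∈ Finset.range (m+1),
      (((k:ℝ) + m) * (((m.choose k : ℝ) * z ^ k * (1-z) ^ (m-k)) * p k)
        + (k:ℝ) * (((m.choose k : ℝ) * z ^ k * (1-z) ^ (m-k)) * (1 - p k)))
      = 2*m*z + 2*m*(polyP m p z) := by
  have hm0 : (m:ℝ) ≠ 0 := by exact_mod_cast Nat.pos_of_ne_zero (by omega) |>.ne'
  have h1 : ∑ k ∈ Finset.range (m+1),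
      (((k:ℝ) + m) * (((m.choose k : ℝ) * z ^ k * (1-z) ^ (m-k)) * p k)
        + (k:ℝ) * (((m.choose k : ℝ) * z ^ k * (1-z) ^ (m-k)) * (1 - p k)))
      = (∑ k ∈ Finset.range (m+1), (m.choose k : ℝ) * z ^ k * (1-z) ^ (m-k) * k)
        + (m:ℝ) * ∑ k ∈ Finset.range (m+1), ((m.choose k : ℝ) * z ^ k * (1-z) ^ (m-k)) * p k := by
    rw [Finset.mul_sum, ← Finset.sum_add_distrib]
    apply Finset.sum_congr rfl; intro k _; ring
  have h2 : polyP m p z = (1/2) * ((∑ k ∈ Finset.range (m+1),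
        ((m.choose k : ℝ) * z ^ k * (1-z) ^ (m-k)) * p k)
      - (1/(m:ℝ)) * ∑ k ∈ Finset.range (m+1), (m.choose k : ℝ) * z ^ k * (1-z) ^ (m-k) * k) := by
    unfold polyP
    congr 1
    rw [Finset.mul_sum, ← Finset.sum_sub_distrib]
    apply Finset.sum_congr rfl; intro k _
    field_simp
  rw [h1, h2, bern_mean m z hm]
  field_simp
  ring

lemma continuous_polyP (m : ℕ) (p : ℕ → ℝ) : Continuous (polyP m p) := by
  unfold polyP
  fun_prop

end AuxAlgebra

namespace PAProcess

variable {Ω : Type} [MeasurableSpace Ω] (P : PAProcess Ω)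

/-- The red event at time `n` with `k` red half-edges. -/
def Rset (n k : ℕ) : Set Ω :=
  {ω | P.A (n + 1) ω = P.A n ω + 1 ∧ P.X (n + 1) ω = P.X n ω + k + P.m}

/-- The blue event at time `n` with `k` red half-edges. -/
def Bset (n k : ℕ) : Set Ω :=
  {ω | P.A (n + 1) ω = P.A n ω ∧ P.X (n + 1) ω = P.X n ω + k}

/-- The binomial weight. -/
def bk (n k : ℕ) (ω : Ω) : ℝ :=
  (P.m.choose k : ℝ) * (P.x n ω) ^ k * (1 - P.x n ω) ^ (P.m - k)

lemma measA' (n : ℕ) : Measurable (P.A n) := (P.adaptedA n).mono (P.F.le n) le_rfl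
lemma measX' (n : ℕ) : Measurable (P.X n) := (P.adaptedX n).mono (P.F.le n) le_rfl

lemma measXR (n : ℕ) : Measurable (fun ω => (P.X n ω : ℝ)) :=
  measurable_from_top.comp (P.measX' n)

lemma measx (n : ℕ) : Measurable (P.x n) := by
  unfold PAProcess.x; exact (P.measXR n).div_const _

lemma measx_F (n : ℕ) : Measurable[P.F n] (P.x n) := by
  unfold PAProcess.x
  exact (measurable_from_top.comp (P.adaptedX n)).div_const _

lemma Scast (n : ℕ) : (P.S n : ℝ) = (P.X0 : ℝ) + P.Y0 + 2 * P.m * n := by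
  unfold PAProcess.S; push_cast; ring

lemma S1cast (n : ℕ) : (P.S (n+1) : ℝ) = (P.S n : ℝ) + 2 * P.m := by
  unfold PAProcess.S; push_cast; ring

lemma Sge (n : ℕ) : 2 * P.m * n ≤ P.S n := by unfold PAProcess.S; omega

lemma S1pos (n : ℕ) : (0:ℝ) < (P.S (n+1) : ℝ) := by
  have h : 0 < P.S (n+1) := by
    have := P.hm; unfold PAProcess.S; nlinarith [Nat.zero_le (P.X0 + P.Y0)]
  exact_mod_cast h

lemma x_mem (n : ℕ) (ω : Ω) : P.x n ω ∈ Set.Icc (0:ℝ) 1 := by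
  unfold PAProcess.x
  rcases eq_or_ne (P.S n) 0 with h0 | h0
  · rw [h0]; simp
  · have hpos : (0:ℝ) < (P.S n : ℝ) := by exact_mod_cast Nat.pos_of_ne_zero h0
    constructor
    · positivity
    · rw [div_le_one hpos]
      exact_mod_cast P.hXle n ω

lemma measRset (n k : ℕ) : MeasurableSet (P.Rset n k) := by
  have h1 : MeasurableSet {ω | P.A (n+1) ω = P.A n ω + 1} :=
    measurableSet_eq_fun (P.measA' (n+1))
      ((measurable_from_top (f := fun a : ℕ => a + 1)).comp (P.measA' n))
  have h2 : MeasurableSet {ω | P.X (n+1) ω = P.X n ω + k + P.m} :=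
    measurableSet_eq_fun (P.measX' (n+1))
      ((measurable_from_top (f := fun a : ℕ => a + k + P.m)).comp (P.measX' n))
  exact h1.inter h2

lemma measBset (n k : ℕ) : MeasurableSet (P.Bset n k) := by
  have h1 : MeasurableSet {ω | P.A (n+1) ω = P.A n ω} :=
    measurableSet_eq_fun (P.measA' (n+1)) (P.measA' n)
  have h2 : MeasurableSet {ω | P.X (n+1) ω = P.X n ω + k} :=
    measurableSet_eq_fun (P.measX' (n+1))
      ((measurable_from_top (f := fun a : ℕ => a + k)).comp (P.measX' n))
  exact h1.inter h2

lemma intIndic {s : Set Ω} (hs : MeasurableSet s) :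
    Integrable (Set.indicator s fun _ => (1:ℝ)) P.μ := by
  haveI := P.isProb
  exact (integrable_const 1).indicator hs

lemma bdd_integrable {f : Ω → ℝ} (hf : AEStronglyMeasurable f P.μ) {C : ℝ}
    (h : ∀ ω, |f ω| ≤ C) : Integrable f P.μ := by
  haveI := P.isProb
  exact (integrable_const C).mono' hf (ae_of_all _ (by simpa [Real.norm_eq_abs] using h))

lemma int_bk (n k : ℕ) : Integrable (fun ω => P.bk n k ω) P.μ := by
  apply P.bdd_integrable (C := (P.m.choose k : ℝ))
  · exact (((measurable_const.mul ((P.measx n).pow_const k)).mul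
      ((measurable_const.sub (P.measx n)).pow_const _))).aestronglyMeasurable
  · intro ω
    have hx := P.x_mem n ω
    unfold PAProcess.bk
    rw [abs_mul, abs_mul]
    have h1 : |P.x n ω ^ k| ≤ 1 := by
      rw [abs_pow]; apply pow_le_one₀ (abs_nonneg _); rw [abs_le]; exact ⟨by linarith [hx.1], hx.2⟩
    have h2 : |(1 - P.x n ω) ^ (P.m - k)| ≤ 1 := by
      rw [abs_pow]; apply pow_le_one₀ (abs_nonneg _); rw [abs_le]
      constructor <;> [linarith [hx.2]; linarith [hx.1]]
    calc |(P.m.choose k : ℝ)| * |P.x n ω ^ k| * |(1 - P.x n ω) ^ (P.m - k)|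
        ≤ |(P.m.choose k : ℝ)| * 1 * 1 := by
          apply mul_le_mul (mul_le_mul le_rfl h1 (abs_nonneg _) (abs_nonneg _)) h2
            (abs_nonneg _) (by positivity)
      _ = (P.m.choose k : ℝ) := by simp

lemma step_red' (n k : ℕ) (hk : k ≤ P.m) :
    P.μ[Set.indicator (P.Rset n k) (fun _ => (1:ℝ)) | P.F n]
      =ᵐ[P.μ] fun ω => P.bk n k ω * P.p k := by
  have h := P.step_red n k hk
  have he : (fun ω => (P.m.choose k : ℝ) *
        ((P.X n ω : ℝ) / ((P.X0 : ℝ) + P.Y0 + 2 * P.m * n)) ^ k *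
        (1 - (P.X n ω : ℝ) / ((P.X0 : ℝ) + P.Y0 + 2 * P.m * n)) ^ (P.m - k) * P.p k)
      = fun ω => P.bk n k ω * P.p k := by
    funext ω; unfold PAProcess.bk PAProcess.x; rw [P.Scast n]
  rw [← he]
  exact h

lemma step_blue' (n k : ℕ) (hk : k ≤ P.m) :
    P.μ[Set.indicator (P.Bset n k) (fun _ => (1:ℝ)) | P.F n]
      =ᵐ[P.μ] fun ω => P.bk n k ω * (1 - P.p k) := by
  have h := P.step_blue n k hk
  have he : (fun ω => (P.m.choose k : ℝ) *
        ((P.X n ω : ℝ) / ((P.X0 : ℝ) + P.Y0 + 2 * P.m * n)) ^ k *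
        (1 - (P.X n ω : ℝ) / ((P.X0 : ℝ) + P.Y0 + 2 * P.m * n)) ^ (P.m - k) * (1 - P.p k))
      = fun ω => P.bk n k ω * (1 - P.p k) := by
    funext ω; unfold PAProcess.bk PAProcess.x; rw [P.Scast n]
  rw [← he]
  exact h

end PAProcess

namespace PAProcess

variable {Ω : Type} [MeasurableSpace Ω] (P : PAProcess Ω)

/-- Sum of indicators of all events. -/
def T (n : ℕ) : Ω → ℝ := fun ω => ∑ k ∈ Finset.range (P.m + 1),
  (Set.indicator (P.Rset n k) (fun _ => (1:ℝ)) ω + Set.indicator (P.Bset n k) (fun _ => (1:ℝ)) ω)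

/-- The jump of `X` written via indicators. -/
def G (n : ℕ) : Ω → ℝ := fun ω => ∑ k ∈ Finset.range (P.m + 1),
  (((k:ℝ) + P.m) * Set.indicator (P.Rset n k) (fun _ => (1:ℝ)) ω
    + (k:ℝ) * Set.indicator (P.Bset n k) (fun _ => (1:ℝ)) ω)

lemma point_mem (n k0 : ℕ) (hk0 : k0 ≤ P.m) (ω : Ω)
    (h : ω ∈ P.Rset n k0 ∪ P.Bset n k0) :
    P.T n ω = 1 ∧ P.G n ω = (P.X (n+1) ω : ℝ) - P.X n ω := by
  have hmem : k0 ∈ Finset.range (P.m + 1) := Finset.mem_range.mpr (by omega)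
  rcases h with h | h
  · obtain ⟨hA, hX⟩ := h
    have hR : ∀ k, ω ∈ P.Rset n k ↔ k = k0 := by
      intro k
      constructor
      · rintro ⟨_, hX'⟩; omega
      · rintro rfl; exact ⟨hA, hX⟩
    have hB : ∀ k, ω ∉ P.Bset n k := by rintro k ⟨hA', _⟩; omega
    have hvalT : ∀ k ∈ Finset.range (P.m + 1),
        Set.indicator (P.Rset n k) (fun _ => (1:ℝ)) ω
          + Set.indicator (P.Bset n k) (fun _ => (1:ℝ)) ω
        = if k = k0 then 1 else 0 := by
      intro k _
      rcases eq_or_ne k k0 with rfl | hne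
      · rw [Set.indicator_of_mem ((hR k).mpr rfl), Set.indicator_of_notMem (hB k)]; simp
      · rw [Set.indicator_of_notMem (fun hmm => hne ((hR k).mp hmm)),
          Set.indicator_of_notMem (hB k)]; simp [hne]
    have hvalG : ∀ k ∈ Finset.range (P.m + 1),
        ((k:ℝ) + P.m) * Set.indicator (P.Rset n k) (fun _ => (1:ℝ)) ω
          + (k:ℝ) * Set.indicator (P.Bset n k) (fun _ => (1:ℝ)) ω
        = if k = k0 then ((k0:ℝ) + P.m) else 0 := by
      intro k _
      rcases eq_or_ne k k0 with rfl | hne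
      · rw [Set.indicator_of_mem ((hR k).mpr rfl), Set.indicator_of_notMem (hB k)]; simp
      · rw [Set.indicator_of_notMem (fun hmm => hne ((hR k).mp hmm)),
          Set.indicator_of_notMem (hB k)]; simp [hne]
    constructor
    · unfold PAProcess.T
      rw [Finset.sum_congr rfl hvalT, Finset.sum_ite_eq' _ k0 (fun _ => (1:ℝ)), if_pos hmem]
    · unfold PAProcess.G
      rw [Finset.sum_congr rfl hvalG,
        Finset.sum_ite_eq' _ k0 (fun _ => ((k0:ℝ) + P.m)), if_pos hmem, hX]
      push_cast; ring
  · obtain ⟨hA, hX⟩ := h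
    have hB : ∀ k, ω ∈ P.Bset n k ↔ k = k0 := by
      intro k
      constructor
      · rintro ⟨_, hX'⟩; omega
      · rintro rfl; exact ⟨hA, hX⟩
    have hR : ∀ k, ω ∉ P.Rset n k := by rintro k ⟨hA', _⟩; omega
    have hvalT : ∀ k ∈ Finset.range (P.m + 1),
        Set.indicator (P.Rset n k) (fun _ => (1:ℝ)) ω
          + Set.indicator (P.Bset n k) (fun _ => (1:ℝ)) ω
        = if k = k0 then 1 else 0 := by
      intro k _
      rcases eq_or_ne k k0 with rfl | hne
      · rw [Set.indicator_of_mem ((hB k).mpr rfl), Set.indicator_of_notMem (hR k)]; simp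
      · rw [Set.indicator_of_notMem (fun hmm => hne ((hB k).mp hmm)),
          Set.indicator_of_notMem (hR k)]; simp [hne]
    have hvalG : ∀ k ∈ Finset.range (P.m + 1),
        ((k:ℝ) + P.m) * Set.indicator (P.Rset n k) (fun _ => (1:ℝ)) ω
          + (k:ℝ) * Set.indicator (P.Bset n k) (fun _ => (1:ℝ)) ω
        = if k = k0 then (k0:ℝ) else 0 := by
      intro k _
      rcases eq_or_ne k k0 with rfl | hne
      · rw [Set.indicator_of_mem ((hB k).mpr rfl), Set.indicator_of_notMem (hR k)]; simp
      · rw [Set.indicator_of_notMem (fun hmm => hne ((hB k).mp hmm)),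
          Set.indicator_of_notMem (hR k)]; simp [hne]
    constructor
    · unfold PAProcess.T
      rw [Finset.sum_congr rfl hvalT, Finset.sum_ite_eq' _ k0 (fun _ => (1:ℝ)), if_pos hmem]
    · unfold PAProcess.G
      rw [Finset.sum_congr rfl hvalG,
        Finset.sum_ite_eq' _ k0 (fun _ => ((k0:ℝ))), if_pos hmem, hX]
      push_cast; ring

lemma T_zero_of_not_mem (n : ℕ) (ω : Ω)
    (h : ∀ k ≤ P.m, ω ∉ P.Rset n k ∧ ω ∉ P.Bset n k) : P.T n ω = 0 := by
  unfold PAProcess.T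
  apply Finset.sum_eq_zero
  intro k hk
  have hk' : k ≤ P.m := by have := Finset.mem_range.mp hk; omega
  rw [Set.indicator_of_notMem (h k hk').1, Set.indicator_of_notMem (h k hk').2, add_zero]

lemma T_zero_or_one (n : ℕ) (ω : Ω) : P.T n ω = 0 ∨ P.T n ω = 1 := by
  by_cases hc : ∃ k ≤ P.m, ω ∈ P.Rset n k ∪ P.Bset n k
  · obtain ⟨k0, hk0, h⟩ := hc
    exact Or.inr (P.point_mem n k0 hk0 ω h).1
  · push_neg at hc
    left
    apply P.T_zero_of_not_mem
    intro k hk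
    have := hc k hk
    exact ⟨fun hmm => this (Or.inl hmm), fun hmm => this (Or.inr hmm)⟩

lemma T_integrable (n : ℕ) : Integrable (P.T n) P.μ := by
  unfold PAProcess.T
  apply integrable_finset_sum
  intro k _
  exact (P.intIndic (P.measRset n k)).add (P.intIndic (P.measBset n k))

lemma integral_T (n : ℕ) : ∫ ω, P.T n ω ∂P.μ = 1 := by
  haveI := P.isProb
  unfold PAProcess.T
  rw [integral_finset_sum (Finset.range (P.m + 1))
    (f := fun k ω => Set.indicator (P.Rset n k) (fun _ => (1:ℝ)) ω
      + Set.indicator (P.Bset n k) (fun _ => (1:ℝ)) ω)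
    (fun k _ => (P.intIndic (P.measRset n k)).add (P.intIndic (P.measBset n k)))]
  have hstep : ∀ k ∈ Finset.range (P.m + 1),
      ∫ ω, (Set.indicator (P.Rset n k) (fun _ => (1:ℝ)) ω
        + Set.indicator (P.Bset n k) (fun _ => (1:ℝ)) ω) ∂P.μ
      = ∫ ω, P.bk n k ω ∂P.μ := by
    intro k hk
    have hk' : k ≤ P.m := by have := Finset.mem_range.mp hk; omega
    rw [integral_add (P.intIndic (P.measRset n k)) (P.intIndic (P.measBset n k))]
    have hr : ∫ ω, Set.indicator (P.Rset n k) (fun _ => (1:ℝ)) ω ∂P.μ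
        = ∫ ω, P.bk n k ω * P.p k ∂P.μ := by
      rw [← integral_condExp (P.F.le n)]
      exact integral_congr_ae (P.step_red' n k hk')
    have hb : ∫ ω, Set.indicator (P.Bset n k) (fun _ => (1:ℝ)) ω ∂P.μ
        = ∫ ω, P.bk n k ω * (1 - P.p k) ∂P.μ := by
      rw [← integral_condExp (P.F.le n)]
      exact integral_congr_ae (P.step_blue' n k hk')
    rw [hr, hb, ← integral_add ((P.int_bk n k).mul_const _) ((P.int_bk n k).mul_const _)]
    apply integral_congr_ae
    apply ae_of_all
    intro ω
    ring
  rw [Finset.sum_congr rfl hstep,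
    ← integral_finset_sum (Finset.range (P.m + 1)) (f := fun k ω => P.bk n k ω)
      (fun k _ => P.int_bk n k)]
  have : ∀ ω, ∑ k ∈ Finset.range (P.m + 1), P.bk n k ω = 1 := by
    intro ω
    unfold PAProcess.bk
    exact bern_sum P.m (P.x n ω)
  rw [integral_congr_ae (ae_of_all _ this)]
  simp

lemma ae_event (n : ℕ) :
    ∀ᵐ ω ∂P.μ, ∃ k ≤ P.m, ω ∈ P.Rset n k ∪ P.Bset n k := by
  haveI := P.isProb
  have hnn : 0 ≤ fun ω => 1 - P.T n ω := by
    intro ω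
    rcases P.T_zero_or_one n ω with h | h <;> simp [Pi.zero_apply, h]
  have hint : Integrable (fun ω => 1 - P.T n ω) P.μ :=
    (integrable_const 1).sub (P.T_integrable n)
  have hzero : ∫ ω, (1 - P.T n ω) ∂P.μ = 0 := by
    rw [integral_sub (integrable_const 1) (P.T_integrable n), P.integral_T n]
    simp
  have hae := (integral_eq_zero_iff_of_nonneg hnn hint).mp hzero
  filter_upwards [hae] with ω hω
  by_contra hc
  push_neg at hc
  have hT0 : P.T n ω = 0 := by
    apply P.T_zero_of_not_mem
    intro k hk
    have := hc k hk
    exact ⟨fun hmm => this (Or.inl hmm), fun hmm => this (Or.inr hmm)⟩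
  have : (1:ℝ) - P.T n ω = 0 := hω
  rw [hT0] at this
  norm_num at this

lemma g_ae_eq_G (n : ℕ) :
    (fun ω => ((P.X (n+1) ω : ℝ) - P.X n ω)) =ᵐ[P.μ] P.G n := by
  filter_upwards [P.ae_event n] with ω hω
  obtain ⟨k0, hk0, h⟩ := hω
  exact ((P.point_mem n k0 hk0 ω h).2).symm

end PAProcess

namespace PAProcess

variable {Ω : Type} [MeasurableSpace Ω] (P : PAProcess Ω)

lemma condexp_G (n : ℕ) :
    P.μ[P.G n | P.F n] =ᵐ[P.μ] fun ω => ∑ k ∈ Finset.range (P.m + 1),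
      (((k:ℝ) + P.m) * (P.bk n k ω * P.p k) + (k:ℝ) * (P.bk n k ω * (1 - P.p k))) := by
  haveI := P.isProb
  have hG : P.G n = ∑ k ∈ Finset.range (P.m + 1),
      (((k:ℝ) + P.m) • Set.indicator (P.Rset n k) (fun _ => (1:ℝ))
        + (k:ℝ) • Set.indicator (P.Bset n k) (fun _ => (1:ℝ))) := by
    funext ω
    unfold PAProcess.G
    rw [Finset.sum_apply]
    apply Finset.sum_congr rfl
    intro k _
    simp [smul_eq_mul]
  rw [hG]
  have hint : ∀ k ∈ Finset.range (P.m + 1),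
      Integrable (((k:ℝ) + P.m) • Set.indicator (P.Rset n k) (fun _ => (1:ℝ))
        + (k:ℝ) • Set.indicator (P.Bset n k) (fun _ => (1:ℝ))) P.μ := by
    intro k _
    exact ((P.intIndic (P.measRset n k)).smul _).add ((P.intIndic (P.measBset n k)).smul _)
  refine (condExp_finsetSum hint (P.F n)).trans ?_
  have hterm : ∀ k ∈ Finset.range (P.m + 1),
      P.μ[((k:ℝ) + P.m) • Set.indicator (P.Rset n k) (fun _ => (1:ℝ))
        + (k:ℝ) • Set.indicator (P.Bset n k) (fun _ => (1:ℝ)) | P.F n]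
      =ᵐ[P.μ] fun ω =>
        (((k:ℝ) + P.m) * (P.bk n k ω * P.p k) + (k:ℝ) * (P.bk n k ω * (1 - P.p k))) := by
    intro k hk
    have hk' : k ≤ P.m := by have := Finset.mem_range.mp hk; omega
    refine (condExp_add ((P.intIndic (P.measRset n k)).smul _)
      ((P.intIndic (P.measBset n k)).smul _) (P.F n)).trans ?_
    have h1 := condExp_smul (μ := P.μ) (m := P.F n) ((k:ℝ) + P.m)
      (Set.indicator (P.Rset n k) (fun _ => (1:ℝ)))
    have h2 := condExp_smul (μ := P.μ) (m := P.F n) ((k:ℝ))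
      (Set.indicator (P.Bset n k) (fun _ => (1:ℝ)))
    filter_upwards [h1, h2, P.step_red' n k hk', P.step_blue' n k hk'] with ω e1 e2 e3 e4
    simp only [Pi.add_apply, Pi.smul_apply, smul_eq_mul] at e1 e2 ⊢
    rw [e1, e2, e3, e4]
  have hae : ∀ᵐ ω ∂P.μ, ∀ k ∈ Finset.range (P.m + 1),
      (P.μ[((k:ℝ) + P.m) • Set.indicator (P.Rset n k) (fun _ => (1:ℝ))
        + (k:ℝ) • Set.indicator (P.Bset n k) (fun _ => (1:ℝ)) | P.F n]) ω
      = (((k:ℝ) + P.m) * (P.bk n k ω * P.p k) + (k:ℝ) * (P.bk n k ω * (1 - P.p k))) :=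
    (Filter.eventually_all_finset _).mpr hterm
  filter_upwards [hae] with ω hω
  rw [Finset.sum_apply]
  exact Finset.sum_congr rfl hω

lemma condexp_g (n : ℕ) :
    P.μ[fun ω => ((P.X (n+1) ω : ℝ) - P.X n ω) | P.F n]
      =ᵐ[P.μ] fun ω => 2 * P.m * (P.x n ω) + 2 * P.m * (polyP P.m P.p (P.x n ω)) := by
  refine (condExp_congr_ae (P.g_ae_eq_G n)).trans ((P.condexp_G n).trans (ae_of_all _ ?_))
  intro ω
  have := alg_sum P.m P.hm P.p (P.x n ω)
  unfold PAProcess.bk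
  exact this

lemma xdiff_eq (n : ℕ) (ω : Ω) :
    P.x (n+1) ω - P.x n ω
      = (((P.X (n+1) ω : ℝ) - P.X n ω) - 2 * P.m * (P.x n ω)) / (P.S (n+1) : ℝ) := by
  have hS1 : (P.S (n+1) : ℝ) = (P.S n : ℝ) + 2 * P.m := P.S1cast n
  have hS1pos : (0:ℝ) < (P.S (n+1) : ℝ) := P.S1pos n
  rcases eq_or_ne (P.S n) 0 with h0 | h0
  · have hXn : P.X n ω = 0 := by
      have h := P.hXle n ω
      have : P.S n = P.X0 + P.Y0 + 2 * P.m * n := rfl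
      omega
    unfold PAProcess.x
    rw [hXn, h0]
    simp
  · have hpos : (0:ℝ) < (P.S n : ℝ) := by exact_mod_cast Nat.pos_of_ne_zero h0
    unfold PAProcess.x
    rw [hS1]
    field_simp
    ring

lemma integrable_xdiff (n : ℕ) :
    Integrable (fun ω => P.x (n+1) ω - P.x n ω) P.μ := by
  apply P.bdd_integrable (C := 2)
  · exact ((P.measx (n+1)).sub (P.measx n)).aestronglyMeasurable
  · intro ω
    have h1 := P.x_mem (n+1) ω
    have h2 := P.x_mem n ω
    rw [abs_le]
    constructor <;> [linarith [h1.1, h2.2]; linarith [h1.2, h2.1]]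

lemma condexp_xdiff (n : ℕ) :
    P.μ[fun ω => P.x (n + 1) ω - P.x n ω | P.F n]
      =ᵐ[P.μ] fun ω => (2 * (P.m : ℝ) / (P.S (n + 1) : ℝ)) * polyP P.m P.p (P.x n ω) := by
  haveI := P.isProb
  set c : ℝ := (P.S (n+1) : ℝ) with hc
  have hcpos : (0:ℝ) < c := P.S1pos n
  have hg_int : Integrable (fun ω => ((P.X (n+1) ω : ℝ) - P.X n ω)) P.μ := by
    apply P.bdd_integrable (C := 2 * (P.S (n+1) : ℝ))
    · exact ((P.measXR (n+1)).sub (P.measXR n)).aestronglyMeasurable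
    · intro ω
      have h1 : (P.X (n+1) ω : ℝ) ≤ (P.S (n+1) : ℝ) := by exact_mod_cast P.hXle (n+1) ω
      have h2 : (P.X n ω : ℝ) ≤ (P.S n : ℝ) := by exact_mod_cast P.hXle n ω
      have h3 : (P.S n : ℝ) ≤ (P.S (n+1) : ℝ) := by
        have hmn : (0:ℝ) ≤ 2 * (P.m:ℝ) := by positivity
        rw [P.S1cast n]; linarith
      have h4 : (0:ℝ) ≤ (P.X (n+1) ω : ℝ) := by positivity
      have h5 : (0:ℝ) ≤ (P.X n ω : ℝ) := by positivity
      rw [abs_le]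
      constructor <;> nlinarith
  have hx_int : Integrable (P.x n) P.μ := by
    apply P.bdd_integrable (C := 1)
    · exact (P.measx n).aestronglyMeasurable
    · intro ω
      have h := P.x_mem n ω
      rw [abs_le]; exact ⟨by linarith [h.1], h.2⟩
  have hfe : (fun ω => P.x (n+1) ω - P.x n ω)
      = (1/c) • (fun ω => ((P.X (n+1) ω : ℝ) - P.X n ω)) - (2*(P.m:ℝ)/c) • P.x n := by
    funext ω
    rw [Pi.sub_apply, Pi.smul_apply, Pi.smul_apply, smul_eq_mul, smul_eq_mul, P.xdiff_eq n ω,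
      ← hc]
    ring
  rw [hfe]
  have hsub := condExp_sub (μ := P.μ) (m := P.F n)
    (hg_int.smul (1/c)) (hx_int.smul (2*(P.m:ℝ)/c))
  refine hsub.trans ?_
  have h1 := condExp_smul (μ := P.μ) (m := P.F n) (1/c)
    (fun ω => ((P.X (n+1) ω : ℝ) - P.X n ω))
  have h2 : P.μ[(2*(P.m:ℝ)/c) • P.x n | P.F n] = (2*(P.m:ℝ)/c) • P.x n :=
    condExp_of_stronglyMeasurable (P.F.le n)
      (((P.measx_F n).stronglyMeasurable).const_smul _) (hx_int.smul _)
  rw [h2]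
  filter_upwards [h1, P.condexp_g n] with ω e1 e2
  rw [Pi.sub_apply, e1, Pi.smul_apply, Pi.smul_apply, smul_eq_mul, smul_eq_mul, e2]
  ring

end PAProcess

/-- **Stochastic approximation.** The process `{x_n}` is a stochastic approximation process
with driving function `F = P`: one has `E(x_{n+1} − x_n | F_n) = (2m/S_{n+1}) P(x_n)`;
writing `x_{n+1} − x_n = (1/n)(P(x_n) + ξ_{n+1} + R_n)` with
`ξ_{n+1} = n (x_{n+1} − x_n − E(x_{n+1} − x_n | F_n))` and
`R_n = −((S_0 + 2m)/(S_0 + 2m(n+1))) P(x_n)`, the noise terms satisfy `E(ξ_{n+1} | F_n) = 0`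
and `|ξ_n| ≤ 2` for all `n ≥ 1`, and the `F_n`-measurable remainder terms satisfy
`∑_{n≥1} n⁻¹ |R_n| < ∞` almost surely. -/
theorem x_is_stochastic_approximation
    {Ω : Type} [MeasurableSpace Ω] (P : PAProcess Ω) :
    (∀ n : ℕ,
      P.μ[fun ω => P.x (n + 1) ω - P.x n ω | P.F n]
        =ᵐ[P.μ] fun ω => (2 * (P.m : ℝ) / (P.S (n + 1) : ℝ)) * P.poly (P.x n ω)) ∧
    (∀ n : ℕ, 1 ≤ n → ∀ᵐ ω ∂P.μ,
      P.x (n + 1) ω - P.x n ω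
        = (1 / (n : ℝ)) * (P.poly (P.x n ω) + P.xi n ω + P.Rrem n ω)) ∧
    (∀ n : ℕ, P.μ[P.xi n | P.F n] =ᵐ[P.μ] 0) ∧
    (∀ n : ℕ, ∀ᵐ ω ∂P.μ, |P.xi n ω| ≤ 2) ∧
    (∀ n : ℕ, StronglyMeasurable[P.F n] (P.Rrem n)) ∧
    (∀ᵐ ω ∂P.μ, Summable fun n : ℕ => |P.Rrem (n + 1) ω| / ((n : ℝ) + 1)) := by
  haveI := P.isProb
  have hpoly : P.poly = polyP P.m P.p := rfl
  have bullet1 : ∀ n : ℕ,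
      P.μ[fun ω => P.x (n + 1) ω - P.x n ω | P.F n]
        =ᵐ[P.μ] fun ω => (2 * (P.m : ℝ) / (P.S (n + 1) : ℝ)) * P.poly (P.x n ω) := by
    intro n
    rw [hpoly]
    exact P.condexp_xdiff n
  have hm1 : (1:ℝ) ≤ (P.m:ℝ) := by exact_mod_cast P.hm
  refine ⟨bullet1, ?_, ?_, ?_, ?_, ?_⟩
  · -- the stochastic approximation decomposition
    intro n hn
    filter_upwards [bullet1 n] with ω h
    have hn0 : (n:ℝ) ≠ 0 := by
      have : n ≠ 0 := by omega
      exact_mod_cast this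
    have hSpos := P.S1pos n
    have hScast : (P.S (n+1) : ℝ) = (P.S 0 : ℝ) + 2 * P.m * ((n:ℝ)+1) := by
      unfold PAProcess.S; push_cast; ring
    simp only [PAProcess.xi, PAProcess.Rrem]
    rw [h]
    have hnum : ((P.S 0:ℝ) + 2 * P.m) = (P.S (n+1):ℝ) - 2 * P.m * n := by
      rw [hScast]; ring
    have hden : ((P.S 0:ℝ) + 2 * P.m * ((n:ℝ)+1)) = (P.S (n+1):ℝ) := hScast.symm
    rw [hnum, hden]
    field_simp
    ring
  · -- conditional expectation of the noise is zero
    intro n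
    have hfe : P.xi n = (n:ℝ) • ((fun ω => P.x (n+1) ω - P.x n ω)
        - P.μ[fun ω => P.x (n + 1) ω - P.x n ω | P.F n]) := by
      funext ω
      simp only [PAProcess.xi, Pi.smul_apply, Pi.sub_apply, smul_eq_mul]
    rw [hfe]
    refine (condExp_smul _ _ _).trans ?_
    have hsub := condExp_sub (μ := P.μ) (m := P.F n) (f := fun ω => P.x (n+1) ω - P.x n ω)
      (g := P.μ[fun ω => P.x (n + 1) ω - P.x n ω | P.F n]) (P.integrable_xdiff n)
      integrable_condExp
    have hcc : P.μ[P.μ[fun ω => P.x (n + 1) ω - P.x n ω | P.F n] | P.F n]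
        = P.μ[fun ω => P.x (n + 1) ω - P.x n ω | P.F n] :=
      condExp_of_stronglyMeasurable (P.F.le n) stronglyMeasurable_condExp integrable_condExp
    rw [hcc] at hsub
    filter_upwards [hsub] with ω h
    rw [Pi.smul_apply, h, Pi.sub_apply, sub_self, smul_zero, Pi.zero_apply]
  · -- the noise is bounded by 2
    intro n
    rcases Nat.eq_zero_or_pos n with rfl | hn
    · apply ae_of_all
      intro ω
      simp [PAProcess.xi]
    · filter_upwards [bullet1 n, P.ae_event n] with ω h hU
      obtain ⟨k0, hk0, hmem⟩ := hU
      have hxm := P.x_mem n ω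
      have hSpos := P.S1pos n
      have hk0R : (k0:ℝ) ≤ (P.m:ℝ) := by exact_mod_cast hk0
      have hnum : 0 ≤ (P.X (n+1) ω:ℝ) - P.X n ω ∧
          (P.X (n+1) ω:ℝ) - P.X n ω ≤ 2 * (P.m:ℝ) := by
        rcases hmem with ⟨_, hX⟩ | ⟨_, hX⟩ <;>
          · rw [hX]; push_cast; constructor <;> nlinarith [Nat.cast_nonneg (α := ℝ) k0]
      have hd : |P.x (n+1) ω - P.x n ω| ≤ 2 * (P.m:ℝ) / (P.S (n+1):ℝ) := by
        rw [P.xdiff_eq n ω, abs_div, abs_of_pos hSpos, div_le_div_iff_of_pos_right hSpos, abs_le]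
        constructor <;> nlinarith [hnum.1, hnum.2, hxm.1, hxm.2]
      have hy : |P.poly (P.x n ω)| ≤ 1/2 := by
        rw [hpoly]
        exact abs_polyP_le P.m P.hm P.p P.hp hxm
      have he : |(2 * (P.m : ℝ) / (P.S (n + 1) : ℝ)) * P.poly (P.x n ω)|
          ≤ (P.m:ℝ) / (P.S (n+1):ℝ) := by
        rw [abs_mul, abs_div, abs_of_pos hSpos]
        have h2m : |2 * (P.m:ℝ)| = 2 * (P.m:ℝ) := abs_of_nonneg (by positivity)
        rw [h2m, div_mul_eq_mul_div, div_le_div_iff_of_pos_right hSpos]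
        nlinarith [abs_nonneg (P.poly (P.x n ω))]
      have hS2 : 2 * (P.m:ℝ) * ((n:ℝ)+1) ≤ (P.S (n+1):ℝ) := by
        have h0 := P.Sge (n+1)
        have h' : ((2 * P.m * (n+1) : ℕ) : ℝ) ≤ ((P.S (n+1) : ℕ) : ℝ) := by exact_mod_cast h0
        push_cast at h'
        linarith
      have hxi_eq : P.xi n ω = (n:ℝ) * ((P.x (n+1) ω - P.x n ω) -
          (2 * (P.m : ℝ) / (P.S (n + 1) : ℝ)) * P.poly (P.x n ω)) := by
        simp only [PAProcess.xi]
        rw [h]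
      calc |P.xi n ω|
          = (n:ℝ) * |(P.x (n+1) ω - P.x n ω) -
              (2 * (P.m : ℝ) / (P.S (n + 1) : ℝ)) * P.poly (P.x n ω)| := by
            rw [hxi_eq, abs_mul, Nat.abs_cast]
        _ ≤ (n:ℝ) * (2 * (P.m:ℝ) / (P.S (n+1):ℝ) + (P.m:ℝ) / (P.S (n+1):ℝ)) := by
            apply mul_le_mul_of_nonneg_left _ (Nat.cast_nonneg n)
            exact le_trans (abs_sub _ _) (add_le_add hd he)
        _ = ((n:ℝ) * (3 * (P.m:ℝ))) / (P.S (n+1):ℝ) := by ring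
        _ ≤ 2 := by
            rw [div_le_iff₀ hSpos]
            nlinarith [mul_nonneg (Nat.cast_nonneg (α := ℝ) n) (Nat.cast_nonneg (α := ℝ) P.m)]
  · -- measurability of the remainder
    intro n
    have hx := P.measx_F n
    have hcont : Continuous (polyP P.m P.p) := continuous_polyP P.m P.p
    have hmeas : Measurable[P.F n] (P.Rrem n) := by
      unfold PAProcess.Rrem
      rw [hpoly]
      exact measurable_const.mul (hcont.measurable.comp hx)
    exact hmeas.stronglyMeasurable
  · -- summability of the remainders
    apply ae_of_all
    intro ω
    obtain ⟨K, hK⟩ : ∃ K : ℝ, K = (P.S 0 : ℝ) + 2 * P.m := ⟨_, rfl⟩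
    have hK0 : 0 ≤ K := by rw [hK]; positivity
    have hmaj : Summable (fun n : ℕ => K * (1/((n:ℝ)+1)^2)) := by
      have h1 : Summable (fun n : ℕ => 1/((n:ℝ))^2) :=
        Real.summable_one_div_nat_pow.mpr one_lt_two
      have h2 := (_root_.summable_nat_add_iff 1).mpr h1
      have h3 : Summable (fun n : ℕ => 1/((n:ℝ)+1)^2) := by
        apply h2.congr
        intro n
        push_cast
        ring
      exact h3.mul_left K
    apply Summable.of_nonneg_of_le _ _ hmaj
    · intro n
      positivity
    · intro n
      have hn1 : (0:ℝ) < (n:ℝ) + 1 := by positivity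
      obtain ⟨D, hD⟩ : ∃ D : ℝ, D = (P.S 0:ℝ) + 2 * P.m * ((n:ℝ)+2) := ⟨_, rfl⟩
      have hDpos : (0:ℝ) < D := by
        rw [hD]
        nlinarith [Nat.cast_nonneg (α := ℝ) (P.S 0), Nat.cast_nonneg (α := ℝ) n]
      have hcast : ((n+1:ℕ):ℝ) + 1 = (n:ℝ) + 2 := by push_cast; ring
      have hRe : |P.Rrem (n+1) ω| = (K / D) * |P.poly (P.x (n+1) ω)| := by
        simp only [PAProcess.Rrem]
        rw [hcast, ← hK, ← hD, abs_mul, abs_neg, abs_div, abs_of_nonneg hK0,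
          abs_of_pos hDpos]
      have hpb : |P.poly (P.x (n+1) ω)| ≤ 1/2 := by
        rw [hpoly]
        exact abs_polyP_le P.m P.hm P.p P.hp (P.x_mem (n+1) ω)
      have hR1 : |P.Rrem (n+1) ω| ≤ K / ((n:ℝ)+1) := by
        rw [hRe]
        have step1 : (K / D) * |P.poly (P.x (n+1) ω)| ≤ (K / D) * (1/2) :=
          mul_le_mul_of_nonneg_left hpb (by positivity)
        have step2 : (K / D) * (1/2) ≤ K / ((n:ℝ)+1) := by
          rw [div_mul_eq_mul_div, div_le_div_iff₀ hDpos hn1]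
          have hDge : ((n:ℝ)+1) * (1/2) ≤ D := by
            rw [hD]
            nlinarith [Nat.cast_nonneg (α := ℝ) (P.S 0), Nat.cast_nonneg (α := ℝ) n]
          nlinarith [mul_le_mul_of_nonneg_left hDge hK0]
        exact le_trans step1 step2
      calc |P.Rrem (n+1) ω| / ((n:ℝ)+1)
          ≤ (K / ((n:ℝ)+1)) / ((n:ℝ)+1) := by
            rw [div_le_div_iff_of_pos_right hn1]
            exact hR1
        _ = K * (1/((n:ℝ)+1)^2) := by
            rw [div_div, mul_one_div, sq]
end
end

section
/- Suppose the parameters {p_k}_{0≤k≤m} do not fall into one of the following three cases: (a) p_k = 0 for all 0 ≤ k ≤ m; (b) p_k = 1 for all 0 ≤ k ≤ m; (c) m = 1, p_0 = 1, p_1 = 0. Suppose z ∈ (0,1) ∩ Z_P. Then there exist integers k_1 and k_2 with k_1 < 2mz < k_2 and, for every δ > 0, a constant c > 0 depending only on δ and the parameters {p_k} such that on the event {x_n ∈ (δ, 1−δ)} one has P(X_{n+1} − X_n = k_1 | F_n) ≥ c and P(X_{n+1} − X_n = k_2 | F_n) ≥ c. -/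
open MeasureTheory ProbabilityTheory Filter Set

noncomputable section

-- ### Auxiliary lemmas

theorem sum_bern (n : ℕ) (z : ℝ) :
    ∑ k ∈ Finset.range (n+1), (n.choose k : ℝ) * z^k * (1-z)^(n-k) = 1 := by
  calc ∑ k ∈ Finset.range (n+1), (n.choose k : ℝ) * z^k * (1-z)^(n-k)
      = (z + (1-z))^n := by
        rw [add_pow]
        exact Finset.sum_congr rfl fun k _ => by ring
    _ = 1 := by norm_num

theorem sum_bern_mul (m : ℕ) (hm : 1 ≤ m) (z : ℝ) :
    ∑ k ∈ Finset.range (m+1), (k:ℝ) * ((m.choose k : ℝ) * z^k * (1-z)^(m-k)) = m * z := by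
  obtain ⟨m', rfl⟩ : ∃ m', m = m' + 1 := ⟨m - 1, (Nat.succ_pred_eq_of_pos hm).symm⟩
  rw [Finset.sum_range_succ']
  have hre : ∀ i ∈ Finset.range (m' + 1),
      ((i+1 : ℕ):ℝ) * (((m'+1).choose (i+1) : ℝ) * z^(i+1) * (1-z)^(m'+1-(i+1)))
      = ((m'+1 : ℝ) * z) * ((m'.choose i : ℝ) * z^i * (1-z)^(m'-i)) := by
    intro i hi
    have hch : (m'+1) * m'.choose i = (m'+1).choose (i+1) * (i+1) := Nat.add_one_mul_choose_eq m' i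
    have hch' : ((m'+1 : ℕ):ℝ) * (m'.choose i : ℝ) = ((m'+1).choose (i+1) : ℝ) * ((i+1:ℕ) : ℝ) := by
      exact_mod_cast congrArg (Nat.cast : ℕ → ℝ) hch
    have hsub : m' + 1 - (i+1) = m' - i := by omega
    rw [hsub]
    push_cast at hch' ⊢
    linear_combination (z^i * z * (1-z)^(m'-i)) * hch'.symm
  rw [Finset.sum_congr rfl hre, ← Finset.mul_sum, sum_bern m' z]
  push_cast
  ring

/-- `∑ B k p k = z` at a zero of `P`. -/
theorem sum_bern_p (m : ℕ) (hm : 1 ≤ m) (p : ℕ → ℝ) (z : ℝ) (hP : polyP m p z = 0) :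
    ∑ k ∈ Finset.range (m+1), ((m.choose k : ℝ) * z^k * (1-z)^(m-k)) * p k = z := by
  have hm0 : (m:ℝ) ≠ 0 := Nat.cast_ne_zero.mpr (by omega)
  have h0 : ∑ k ∈ Finset.range (m+1),
      (m.choose k : ℝ) * z ^ k * (1 - z) ^ (m - k) * (p k - (k : ℝ) / m) = 0 := by
    have := hP
    unfold polyP at this
    linarith
  have hsplit : ∑ k ∈ Finset.range (m+1),
      (m.choose k : ℝ) * z ^ k * (1 - z) ^ (m - k) * (p k - (k : ℝ) / m)
      = (∑ k ∈ Finset.range (m+1), ((m.choose k : ℝ) * z^k * (1-z)^(m-k)) * p k)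
        - (1/m) * ∑ k ∈ Finset.range (m+1), (k:ℝ) * ((m.choose k : ℝ) * z^k * (1-z)^(m-k)) := by
    rw [Finset.mul_sum, ← Finset.sum_sub_distrib]
    exact Finset.sum_congr rfl fun k _ => by field_simp
  rw [hsplit, sum_bern_mul m hm z] at h0
  have : (1/(m:ℝ)) * ((m:ℝ) * z) = z := by field_simp
  linarith [this ▸ h0]

/-- The key identity: the centered mean of the degree increment vanishes at a zero of `P`. -/
theorem T_eq_zero (m : ℕ) (hm : 1 ≤ m) (p : ℕ → ℝ) (z : ℝ) (hP : polyP m p z = 0) :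
    ∑ k ∈ Finset.range (m+1), ((m.choose k : ℝ) * z^k * (1-z)^(m-k)) *
      ((1 - p k) * ((k:ℝ) - 2*m*z) + p k * ((k:ℝ) + m - 2*m*z)) = 0 := by
  have hre : ∀ k ∈ Finset.range (m+1),
      ((m.choose k : ℝ) * z^k * (1-z)^(m-k)) *
        ((1 - p k) * ((k:ℝ) - 2*m*z) + p k * ((k:ℝ) + m - 2*m*z))
      = (k:ℝ) * ((m.choose k : ℝ) * z^k * (1-z)^(m-k))
        - (2*m*z) * ((m.choose k : ℝ) * z^k * (1-z)^(m-k))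
        + (m:ℝ) * (((m.choose k : ℝ) * z^k * (1-z)^(m-k)) * p k) := by
    intro k _; ring
  rw [Finset.sum_congr rfl hre, Finset.sum_add_distrib, Finset.sum_sub_distrib,
    ← Finset.mul_sum, ← Finset.mul_sum, sum_bern_mul m hm z, sum_bern m z,
    sum_bern_p m hm p z hP]
  ring

theorem degenerate_contra (m : ℕ) (hm : 1 ≤ m) (p : ℕ → ℝ) (z : ℝ)
    (hz0 : 0 < z) (hz1 : z < 1)
    (hc : ¬(m = 1 ∧ p 0 = 1 ∧ p 1 = 0))
    (h : ∀ k ≤ m, (p k = 1 ∨ (k:ℝ) = 2*m*z) ∧ (p k = 0 ∨ (k:ℝ) + m = 2*m*z)) : False := by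
  have hdich : ∀ k ≤ m, (k:ℝ) = 2*m*z ∨ (k:ℝ) + m = 2*m*z := by
    intro k hk
    obtain ⟨h1, h2⟩ := h k hk
    rcases h1 with hp1 | he
    · rcases h2 with hp0 | he2
      · rw [hp1] at hp0; norm_num at hp0
      · exact Or.inr he2
    · exact Or.inl he
  rcases eq_or_lt_of_le hm with hm1 | hm2
  · have hm1 : m = 1 := hm1.symm
    subst hm1
    have hp0 : p 0 = 1 := by
      rcases (h 0 (by norm_num)).1 with h' | h'
      · exact h'
      · push_cast at h'; nlinarith
    have hp1 : p 1 = 0 := by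
      rcases (h 1 le_rfl).2 with h' | h'
      · exact h'
      · push_cast at h'; nlinarith
    exact hc ⟨rfl, hp0, hp1⟩
  · have hm2' : (2:ℝ) ≤ (m:ℝ) := by exact_mod_cast hm2
    have h0 := hdich 0 (by omega)
    have h1 := hdich 1 (by omega)
    have h2 := hdich 2 (by omega)
    push_cast at h0 h1 h2
    rcases h0 with h0 | h0 <;> rcases h1 with h1 | h1 <;> rcases h2 with h2 | h2 <;> linarith

/-- An increment value `j` achievable with probability bounded below. -/
def goodIncr (m : ℕ) (p : ℕ → ℝ) (j : ℕ) : Prop :=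
  (j ≤ m ∧ p j < 1) ∨ (∃ k ≤ m, j = k + m ∧ 0 < p k)

theorem bern_pos {m k : ℕ} (hk : k ≤ m) {z : ℝ} (hz0 : 0 < z) (hz1 : z < 1) :
    0 < (m.choose k : ℝ) * z^k * (1-z)^(m-k) := by
  have h1 : (0:ℝ) < (m.choose k : ℝ) := by exact_mod_cast Nat.choose_pos hk
  exact mul_pos (mul_pos h1 (pow_pos hz0 k)) (pow_pos (by linarith) _)

theorem exists_good_lt_and_gt (m : ℕ) (hm : 1 ≤ m) (p : ℕ → ℝ)
    (hp : ∀ k ≤ m, p k ∈ Set.Icc (0:ℝ) 1)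
    (hc : ¬(m = 1 ∧ p 0 = 1 ∧ p 1 = 0)) (z : ℝ) (hz0 : 0 < z) (hz1 : z < 1)
    (hP : polyP m p z = 0) :
    (∃ j, goodIncr m p j ∧ (j:ℝ) < 2*m*z) ∧ (∃ j, goodIncr m p j ∧ 2*m*z < (j:ℝ)) := by
  have hT := T_eq_zero m hm p z hP
  constructor
  · by_contra hno
    push_neg at hno
    have hA : ∀ k ≤ m, p k < 1 → 2*(m:ℝ)*z ≤ k := fun k hk h1 => hno k (Or.inl ⟨hk, h1⟩)
    have hB : ∀ k ≤ m, 0 < p k → 2*(m:ℝ)*z ≤ k + m := by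
      intro k hk h1
      have := hno (k+m) (Or.inr ⟨k, hk, rfl, h1⟩)
      push_cast at this; linarith
    have hnn : ∀ k ∈ Finset.range (m+1),
        0 ≤ ((m.choose k : ℝ) * z^k * (1-z)^(m-k)) *
          ((1 - p k) * ((k:ℝ) - 2*m*z) + p k * ((k:ℝ) + m - 2*m*z)) := by
      intro k hk
      have hkm : k ≤ m := by simpa using Nat.lt_succ_iff.mp (Finset.mem_range.mp hk)
      obtain ⟨hp0, hp1⟩ := hp k hkm
      have h1 : 0 ≤ (1 - p k) * ((k:ℝ) - 2*m*z) := by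
        rcases lt_or_eq_of_le hp1 with h | h
        · have := hA k hkm h; nlinarith
        · rw [h]; ring_nf; exact le_refl 0
      have h2 : 0 ≤ p k * ((k:ℝ) + m - 2*m*z) := by
        rcases lt_or_eq_of_le hp0 with h | h
        · have := hB k hkm h; nlinarith
        · rw [← h]; ring_nf; exact le_refl 0
      exact mul_nonneg (bern_pos hkm hz0 hz1).le (by linarith)
    have hall := (Finset.sum_eq_zero_iff_of_nonneg hnn).mp hT
    refine degenerate_contra m hm p z hz0 hz1 hc ?_
    intro k hkm
    have hk : k ∈ Finset.range (m+1) := Finset.mem_range.mpr (by omega)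
    have hterm := hall k hk
    have hB0 := bern_pos hkm hz0 hz1
    have hinner : (1 - p k) * ((k:ℝ) - 2*m*z) + p k * ((k:ℝ) + m - 2*m*z) = 0 := by
      rcases mul_eq_zero.mp hterm with h | h
      · exact absurd h hB0.ne'
      · exact h
    obtain ⟨hp0, hp1⟩ := hp k hkm
    have hnn1 : 0 ≤ (1 - p k) * ((k:ℝ) - 2*m*z) := by
      rcases lt_or_eq_of_le hp1 with h | h
      · have := hA k hkm h; nlinarith
      · rw [h]; ring_nf; exact le_refl 0
    have hnn2 : 0 ≤ p k * ((k:ℝ) + m - 2*m*z) := by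
      rcases lt_or_eq_of_le hp0 with h | h
      · have := hB k hkm h; nlinarith
      · rw [← h]; ring_nf; exact le_refl 0
    have hz1' := ((add_eq_zero_iff_of_nonneg hnn1 hnn2).mp hinner).1
    have hz2' := ((add_eq_zero_iff_of_nonneg hnn1 hnn2).mp hinner).2
    constructor
    · rcases mul_eq_zero.mp hz1' with h | h
      · left; linarith
      · right; linarith
    · rcases mul_eq_zero.mp hz2' with h | h
      · left; linarith
      · right; linarith
  · by_contra hno
    push_neg at hno
    have hA : ∀ k ≤ m, p k < 1 → (k:ℝ) ≤ 2*(m:ℝ)*z := fun k hk h1 => hno k (Or.inl ⟨hk, h1⟩)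
    have hB : ∀ k ≤ m, 0 < p k → (k:ℝ) + m ≤ 2*(m:ℝ)*z := by
      intro k hk h1
      have := hno (k+m) (Or.inr ⟨k, hk, rfl, h1⟩)
      push_cast at this; linarith
    have hnp : ∀ k ∈ Finset.range (m+1),
        ((m.choose k : ℝ) * z^k * (1-z)^(m-k)) *
          ((1 - p k) * ((k:ℝ) - 2*m*z) + p k * ((k:ℝ) + m - 2*m*z)) ≤ 0 := by
      intro k hk
      have hkm : k ≤ m := by simpa using Nat.lt_succ_iff.mp (Finset.mem_range.mp hk)
      obtain ⟨hp0, hp1⟩ := hp k hkm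
      have h1 : (1 - p k) * ((k:ℝ) - 2*m*z) ≤ 0 := by
        rcases lt_or_eq_of_le hp1 with h | h
        · have := hA k hkm h; nlinarith
        · rw [h]; ring_nf; exact le_refl 0
      have h2 : p k * ((k:ℝ) + m - 2*m*z) ≤ 0 := by
        rcases lt_or_eq_of_le hp0 with h | h
        · have := hB k hkm h; nlinarith
        · rw [← h]; ring_nf; exact le_refl 0
      exact mul_nonpos_of_nonneg_of_nonpos (bern_pos hkm hz0 hz1).le (by linarith)
    have hall := (Finset.sum_eq_zero_iff_of_nonpos hnp).mp hT
    refine degenerate_contra m hm p z hz0 hz1 hc ?_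
    intro k hkm
    have hk : k ∈ Finset.range (m+1) := Finset.mem_range.mpr (by omega)
    have hterm := hall k hk
    have hB0 := bern_pos hkm hz0 hz1
    have hinner : (1 - p k) * ((k:ℝ) - 2*m*z) + p k * ((k:ℝ) + m - 2*m*z) = 0 := by
      rcases mul_eq_zero.mp hterm with h | h
      · exact absurd h hB0.ne'
      · exact h
    obtain ⟨hp0, hp1⟩ := hp k hkm
    have hnp1 : (1 - p k) * ((k:ℝ) - 2*m*z) ≤ 0 := by
      rcases lt_or_eq_of_le hp1 with h | h
      · have := hA k hkm h; nlinarith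
      · rw [h]; ring_nf; exact le_refl 0
    have hnp2 : p k * ((k:ℝ) + m - 2*m*z) ≤ 0 := by
      rcases lt_or_eq_of_le hp0 with h | h
      · have := hB k hkm h; nlinarith
      · rw [← h]; ring_nf; exact le_refl 0
    have hz1' : (1 - p k) * ((k:ℝ) - 2*m*z) = 0 := by linarith
    have hz2' : p k * ((k:ℝ) + m - 2*m*z) = 0 := by linarith
    constructor
    · rcases mul_eq_zero.mp hz1' with h | h
      · left; linarith
      · right; linarith
    · rcases mul_eq_zero.mp hz2' with h | h
      · left; linarith
      · right; linarith

theorem form_bound (m k : ℕ) (hk : k ≤ m) (δ t w : ℝ) (hδ : 0 < δ)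
    (ht1 : δ < t) (ht2 : t < 1 - δ) (hw0 : 0 ≤ w) :
    δ^m * w ≤ (m.choose k : ℝ) * t^k * (1-t)^(m-k) * w := by
  have hδt : δ ≤ t := ht1.le
  have h0t : (0:ℝ) ≤ t := le_trans hδ.le hδt
  have h1 : δ^k ≤ t^k := pow_le_pow_left₀ hδ.le hδt k
  have h2 : δ^(m-k) ≤ (1-t)^(m-k) := pow_le_pow_left₀ hδ.le (by linarith) _
  have hC : (1:ℝ) ≤ (m.choose k : ℝ) := by exact_mod_cast Nat.choose_pos hk
  have hδm : δ^m = δ^k * δ^(m-k) := by rw [← pow_add]; congr 1; omega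
  calc δ^m * w = (δ^k * δ^(m-k)) * w := by rw [hδm]
    _ ≤ (t^k * (1-t)^(m-k)) * w := by
        refine mul_le_mul_of_nonneg_right ?_ hw0
        exact mul_le_mul h1 h2 (pow_nonneg hδ.le _) (pow_nonneg h0t _)
    _ ≤ (m.choose k : ℝ) * t^k * (1-t)^(m-k) * w := by
        have hnn : 0 ≤ (t^k * (1-t)^(m-k)) * w :=
          mul_nonneg (mul_nonneg (pow_nonneg h0t _) (pow_nonneg (by linarith) _)) hw0
        calc (t^k * (1-t)^(m-k)) * w
            ≤ (m.choose k : ℝ) * ((t^k * (1-t)^(m-k)) * w) := le_mul_of_one_le_left hnn hC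
          _ = (m.choose k : ℝ) * t^k * (1-t)^(m-k) * w := by ring

theorem PAProcess.good_bound {Ω : Type} [MeasurableSpace Ω] (P : PAProcess Ω) (j : ℕ)
    (hg : goodIncr P.m P.p j) (δ : ℝ) (hδ : 0 < δ) :
    ∃ c > (0:ℝ), ∀ n : ℕ, ∀ᵐ ω ∂P.μ, P.x n ω ∈ Set.Ioo δ (1 - δ) →
      c ≤ (P.μ[Set.indicator {ω' | P.X (n + 1) ω' = P.X n ω' + j}
            (fun _ => (1 : ℝ)) | P.F n]) ω := by
  haveI := P.isProb
  have mX : ∀ n, Measurable (P.X n) := fun n => (P.adaptedX n).mono (P.F.le n) le_rfl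
  have mA : ∀ n, Measurable (P.A n) := fun n => (P.adaptedA n).mono (P.F.le n) le_rfl
  have hSx : ∀ n ω, ((P.X n ω : ℝ) / ((P.X0 : ℝ) + P.Y0 + 2 * P.m * n)) = P.x n ω := by
    intro n ω
    have : ((P.S n : ℕ) : ℝ) = (P.X0 : ℝ) + P.Y0 + 2 * P.m * n := by
      unfold PAProcess.S; push_cast; ring
    rw [PAProcess.x, this]
  rcases hg with ⟨hjm, hpj⟩ | ⟨k, hkm, rfl, hpk⟩
  · -- blue case
    refine ⟨δ^P.m * (1 - P.p j), mul_pos (pow_pos hδ _) (by linarith), fun n => ?_⟩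
    have msmall : MeasurableSet {ω | P.A (n+1) ω = P.A n ω ∧ P.X (n+1) ω = P.X n ω + j} := by
      have h1 : MeasurableSet {ω | P.A (n+1) ω = P.A n ω} :=
        measurableSet_eq_fun (mA (n+1)) (mA n)
      have h2 : MeasurableSet {ω | P.X (n+1) ω = P.X n ω + j} :=
        measurableSet_eq_fun (mX (n+1)) ((mX n).add measurable_const)
      exact h1.inter h2
    have mbig : MeasurableSet {ω' | P.X (n+1) ω' = P.X n ω' + j} :=
      measurableSet_eq_fun (mX (n+1)) ((mX n).add measurable_const)
    have hint1 : MeasureTheory.Integrable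
        (Set.indicator {ω | P.A (n+1) ω = P.A n ω ∧ P.X (n+1) ω = P.X n ω + j}
          (fun _ => (1:ℝ))) P.μ := (MeasureTheory.integrable_const (1:ℝ)).indicator msmall
    have hint2 : MeasureTheory.Integrable
        (Set.indicator {ω' | P.X (n+1) ω' = P.X n ω' + j} (fun _ => (1:ℝ))) P.μ :=
      (MeasureTheory.integrable_const (1:ℝ)).indicator mbig
    have hsub : {ω | P.A (n+1) ω = P.A n ω ∧ P.X (n+1) ω = P.X n ω + j}
        ⊆ {ω' | P.X (n+1) ω' = P.X n ω' + j} := fun ω hω => hω.2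
    have hle : Set.indicator {ω | P.A (n+1) ω = P.A n ω ∧ P.X (n+1) ω = P.X n ω + j}
          (fun _ => (1:ℝ))
        ≤ᵐ[P.μ] Set.indicator {ω' | P.X (n+1) ω' = P.X n ω' + j} (fun _ => (1:ℝ)) :=
      Filter.Eventually.of_forall
        (Set.indicator_le_indicator_of_subset hsub (fun _ => zero_le_one))
    have hmono := MeasureTheory.condExp_mono (μ := P.μ) (m := P.F n) hint1 hint2 hle
    have hstep := P.step_blue n j hjm
    filter_upwards [hstep, hmono] with ω heq hcm hx
    have hx1 := hx.1
    have hx2 := hx.2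
    rw [← hSx n ω] at hx1 hx2
    calc δ^P.m * (1 - P.p j)
        ≤ (P.m.choose j : ℝ) *
            ((P.X n ω : ℝ) / ((P.X0 : ℝ) + P.Y0 + 2 * P.m * n)) ^ j *
            (1 - (P.X n ω : ℝ) / ((P.X0 : ℝ) + P.Y0 + 2 * P.m * n)) ^ (P.m - j) *
            (1 - P.p j) := by
          refine form_bound P.m j hjm δ _ _ hδ hx1 hx2 (by linarith)
      _ = (P.μ[Set.indicator {ω | P.A (n+1) ω = P.A n ω ∧ P.X (n+1) ω = P.X n ω + j}
            (fun _ => (1:ℝ)) | P.F n]) ω := heq.symm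
      _ ≤ _ := hcm
  · -- red case
    refine ⟨δ^P.m * P.p k, mul_pos (pow_pos hδ _) hpk, fun n => ?_⟩
    have msmall : MeasurableSet
        {ω | P.A (n+1) ω = P.A n ω + 1 ∧ P.X (n+1) ω = P.X n ω + k + P.m} := by
      have h1 : MeasurableSet {ω | P.A (n+1) ω = P.A n ω + 1} :=
        measurableSet_eq_fun (mA (n+1)) ((mA n).add measurable_const)
      have h2 : MeasurableSet {ω | P.X (n+1) ω = P.X n ω + k + P.m} := by
        have : (fun ω => P.X n ω + k + P.m) = fun ω => P.X n ω + (k + P.m) := by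
          funext ω; omega
        exact measurableSet_eq_fun (mX (n+1))
          (by rw [this]; exact (mX n).add measurable_const)
      exact h1.inter h2
    have mbig : MeasurableSet {ω' | P.X (n+1) ω' = P.X n ω' + (k + P.m)} :=
      measurableSet_eq_fun (mX (n+1)) ((mX n).add measurable_const)
    have hint1 : MeasureTheory.Integrable
        (Set.indicator {ω | P.A (n+1) ω = P.A n ω + 1 ∧ P.X (n+1) ω = P.X n ω + k + P.m}
          (fun _ => (1:ℝ))) P.μ := (MeasureTheory.integrable_const (1:ℝ)).indicator msmall
    have hint2 : MeasureTheory.Integrable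
        (Set.indicator {ω' | P.X (n+1) ω' = P.X n ω' + (k + P.m)} (fun _ => (1:ℝ))) P.μ :=
      (MeasureTheory.integrable_const (1:ℝ)).indicator mbig
    have hsub : {ω | P.A (n+1) ω = P.A n ω + 1 ∧ P.X (n+1) ω = P.X n ω + k + P.m}
        ⊆ {ω' | P.X (n+1) ω' = P.X n ω' + (k + P.m)} := by
      intro ω hω
      have := hω.2
      simp only [Set.mem_setOf_eq]
      omega
    have hle : Set.indicator
          {ω | P.A (n+1) ω = P.A n ω + 1 ∧ P.X (n+1) ω = P.X n ω + k + P.m}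
          (fun _ => (1:ℝ))
        ≤ᵐ[P.μ] Set.indicator {ω' | P.X (n+1) ω' = P.X n ω' + (k + P.m)}
          (fun _ => (1:ℝ)) :=
      Filter.Eventually.of_forall
        (Set.indicator_le_indicator_of_subset hsub (fun _ => zero_le_one))
    have hmono := MeasureTheory.condExp_mono (μ := P.μ) (m := P.F n) hint1 hint2 hle
    have hstep := P.step_red n k hkm
    filter_upwards [hstep, hmono] with ω heq hcm hx
    have hx1 := hx.1
    have hx2 := hx.2
    rw [← hSx n ω] at hx1 hx2
    calc δ^P.m * P.p k
        ≤ (P.m.choose k : ℝ) *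
            ((P.X n ω : ℝ) / ((P.X0 : ℝ) + P.Y0 + 2 * P.m * n)) ^ k *
            (1 - (P.X n ω : ℝ) / ((P.X0 : ℝ) + P.Y0 + 2 * P.m * n)) ^ (P.m - k) *
            P.p k := by
          refine form_bound P.m k hkm δ _ _ hδ hx1 hx2 hpk.le
      _ = (P.μ[Set.indicator
            {ω | P.A (n+1) ω = P.A n ω + 1 ∧ P.X (n+1) ω = P.X n ω + k + P.m}
            (fun _ => (1:ℝ)) | P.F n]) ω := heq.symm
      _ ≤ _ := hcm

/-- **Noise lower bound.** Suppose the parameters `{p_k}` do not fall into one of the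
three cases: (a) `p_k = 0` for all `k`; (b) `p_k = 1` for all `k`; (c) `m = 1, p_0 = 1,
p_1 = 0`.  Suppose `z ∈ (0,1) ∩ Z_P`.  Then there exist integers `k₁ < 2mz < k₂` such that
for every `δ > 0` there is a constant `c > 0` (depending only on `δ` and the parameters)
such that on the event `{x_n ∈ (δ, 1−δ)}` one has
`P(X_{n+1} − X_n = k₁ | F_n) ≥ c` and `P(X_{n+1} − X_n = k₂ | F_n) ≥ c`. -/
theorem exists_conditional_probability_lower_bound
    {Ω : Type} [MeasurableSpace Ω] (P : PAProcess Ω)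
    (ha : ¬ (∀ k ≤ P.m, P.p k = 0))
    (hb : ¬ (∀ k ≤ P.m, P.p k = 1))
    (hc : ¬ (P.m = 1 ∧ P.p 0 = 1 ∧ P.p 1 = 0))
    (z : ℝ) (hz : z ∈ Set.Ioo (0 : ℝ) 1 ∩ P.Zp) :
    ∃ k₁ k₂ : ℕ, (k₁ : ℝ) < 2 * P.m * z ∧ 2 * P.m * z < (k₂ : ℝ) ∧
      ∀ δ > (0 : ℝ), ∃ c > (0 : ℝ), ∀ n : ℕ, ∀ᵐ ω ∂P.μ,
        P.x n ω ∈ Set.Ioo δ (1 - δ) →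
          c ≤ (P.μ[Set.indicator {ω' | P.X (n + 1) ω' = P.X n ω' + k₁}
                (fun _ => (1 : ℝ)) | P.F n]) ω ∧
          c ≤ (P.μ[Set.indicator {ω' | P.X (n + 1) ω' = P.X n ω' + k₂}
                (fun _ => (1 : ℝ)) | P.F n]) ω := by
  have hz01 := hz.1
  have hPz : polyP P.m P.p z = 0 := hz.2.2
  obtain ⟨⟨j₁, hg₁, hlt₁⟩, ⟨j₂, hg₂, hgt₂⟩⟩ :=
    exists_good_lt_and_gt P.m P.hm P.p P.hp hc z hz01.1 hz01.2 hPz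
  refine ⟨j₁, j₂, hlt₁, hgt₂, ?_⟩
  intro δ hδ
  obtain ⟨c₁, hc₁, h₁⟩ := P.good_bound j₁ hg₁ δ hδ
  obtain ⟨c₂, hc₂, h₂⟩ := P.good_bound j₂ hg₂ δ hδ
  refine ⟨min c₁ c₂, lt_min hc₁ hc₂, fun n => ?_⟩
  filter_upwards [h₁ n, h₂ n] with ω ha hb hx
  exact ⟨le_trans (min_le_left _ _) (ha hx), le_trans (min_le_right _ _) (hb hx)⟩
end
end
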